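/- arXiv:0806.0430 — 7 statements merged into one kernel-verified Lean document; each statement's English description precedes it below -/
import Mathlib

section
/- Let (X,μ) be a standard probability space and E a countable, measure-preserving equivalence relation on (X,μ). Define ψ_E(S,T) = μ({x : S⁻¹(x) E T⁻¹(x)}) for S,T ∈ Aut(X,μ). Then ψ_E is a positive-definite kernel on Aut(X,μ): for all S_1,…,S_n ∈ Aut(X,μ) and all α_1,…,α_n ∈ ℂ, the sum Σ_{1≤i,j≤n} conj(α_i)·α_j·ψ_E(S_i,S_j) is a nonnegative real number. Consequently, the function φ_E(S) = μ({x : S(x) E x}) is a positive-definite function on the group Aut(X,μ): for all S_1,…,S_n ∈ Aut(X,μ) and α_1,…,α_n ∈ ℂ, Σ_{1≤i,j≤n} conj(α_i)·α_j·φ_E(S_i⁻¹∘S_j) is a nonnegative real. -/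
open MeasureTheory Filter Topology
open scoped ComplexOrder

/-- `E` is a countable, measure-preserving equivalence relation on `(X, μ)`:
a Borel equivalence relation with countable classes such that every Borel
automorphism contained in it preserves `μ`. -/
def IsCountableMPER {X : Type*} [MeasurableSpace X] (μ : Measure X)
    (E : X → X → Prop) : Prop :=
  Equivalence E ∧
  MeasurableSet {p : X × X | E p.1 p.2} ∧
  (∀ x, {y | E x y}.Countable) ∧
  ∀ T : X ≃ᵐ X, (∀ x, E (T x) x) → MeasurePreserving T μ μ

/-- The kernel `ψ_E(S,T) = μ({x : S⁻¹(x) E T⁻¹(x)})`. -/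
noncomputable def psiE {X : Type*} [MeasurableSpace X] (μ : Measure X)
    (E : X → X → Prop) (S T : X ≃ᵐ X) : ℝ :=
  (μ {x | E (S.symm x) (T.symm x)}).toReal

/-- The function `φ_E(S) = μ({x : S(x) E x})`. -/
noncomputable def phiE {X : Type*} [MeasurableSpace X] (μ : Measure X)
    (E : X → X → Prop) (S : X ≃ᵐ X) : ℝ :=
  (μ {x | E (S x) x}).toReal

open Classical in
/-- For any map `g : Fin n → β`, the kernel `(i,j) ↦ [g i = g j]` is
positive definite. -/
lemma sum_pd_aux {n : ℕ} {β : Type*} (g : Fin n → β) (α : Fin n → ℂ) :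
    0 ≤ ∑ i, ∑ j, (starRingEnd ℂ) (α i) * α j * (if g i = g j then 1 else 0) := by
  classical
  set T : β → ℂ := fun c => ∑ i ∈ Finset.univ.filter (fun i => g i = c), α i with hT
  have inner : ∀ i, ∑ j, (starRingEnd ℂ) (α i) * α j * (if g i = g j then 1 else 0)
      = (starRingEnd ℂ) (α i) * T (g i) := by
    intro i
    rw [hT]
    simp only [Finset.sum_filter, Finset.mul_sum]
    apply Finset.sum_congr rfl
    intro j _
    by_cases h : g j = g i
    · simp [h]
    · rw [if_neg (fun h' => h h'.symm), if_neg h]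
      ring
  rw [Finset.sum_congr rfl (fun i _ => inner i)]
  have fib : ∑ i, (starRingEnd ℂ) (α i) * T (g i)
      = ∑ c ∈ Finset.univ.image g, ∑ i ∈ Finset.univ.filter (fun i => g i = c),
          (starRingEnd ℂ) (α i) * T (g i) :=
    (Finset.sum_fiberwise_of_maps_to
      (fun i _ => Finset.mem_image_of_mem g (Finset.mem_univ i)) _).symm
  rw [fib]
  apply Finset.sum_nonneg
  intro c _
  have : ∑ i ∈ Finset.univ.filter (fun i => g i = c), (starRingEnd ℂ) (α i) * T (g i)
      = (starRingEnd ℂ) (T c) * T c := by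
    rw [hT, map_sum, Finset.sum_mul]
    apply Finset.sum_congr rfl
    intro i hi
    rw [Finset.mem_filter] at hi
    rw [hi.2]
  rw [this, ← Complex.normSq_eq_conj_mul_self]
  exact Complex.zero_le_real.mpr (Complex.normSq_nonneg _)

/-- The kernel `ψ_E` is positive-definite on `Aut(X,μ)`, and consequently
`φ_E` is a positive-definite function on the group `Aut(X,μ)`. -/
theorem psiE_positiveDefinite_and_phiE_positiveDefinite
    {X : Type} [MeasurableSpace X] [StandardBorelSpace X]
    (μ : Measure X) [IsProbabilityMeasure μ]
    (E : X → X → Prop) (hE : IsCountableMPER μ E) :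
    (∀ (n : ℕ) (S : Fin n → X ≃ᵐ X), (∀ i, MeasurePreserving (S i) μ μ) →
      ∀ α : Fin n → ℂ,
        0 ≤ ∑ i, ∑ j, (starRingEnd ℂ) (α i) * α j * (psiE μ E (S i) (S j) : ℂ)) ∧
    (∀ (n : ℕ) (S : Fin n → X ≃ᵐ X), (∀ i, MeasurePreserving (S i) μ μ) →
      ∀ α : Fin n → ℂ,
        0 ≤ ∑ i, ∑ j, (starRingEnd ℂ) (α i) * α j *
          (phiE μ E ((S j).trans (S i).symm) : ℂ)) := by
  classical
  obtain ⟨hEq, hEmeas, -, -⟩ := hE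
  have part1 : ∀ (n : ℕ) (S : Fin n → X ≃ᵐ X), (∀ i, MeasurePreserving (S i) μ μ) →
      ∀ α : Fin n → ℂ,
        0 ≤ ∑ i, ∑ j, (starRingEnd ℂ) (α i) * α j * (psiE μ E (S i) (S j) : ℂ) := by
    intro n S hS α
    set A : Fin n → Fin n → Set X := fun i j => {x | E ((S i).symm x) ((S j).symm x)} with hA
    have hAmeas : ∀ i j, MeasurableSet (A i j) := by
      intro i j
      have : A i j = (fun x => (((S i).symm x), ((S j).symm x))) ⁻¹' {p : X × X | E p.1 p.2} :=
        rfl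
      rw [this]
      exact ((S i).symm.measurable.prodMk (S j).symm.measurable) hEmeas
    set f : Fin n → Fin n → X → ℂ :=
      fun i j x => (((A i j).indicator (fun _ => (1:ℝ)) x : ℝ) : ℂ) with hf
    have hint : ∀ i j, Integrable (f i j) μ := by
      intro i j
      have hr : Integrable ((A i j).indicator (fun _ => (1:ℝ))) μ := by
        rw [integrable_indicator_iff (hAmeas i j)]
        exact integrableOn_const (measure_ne_top μ _)
      exact hr.ofReal
    have key : ∀ i j, ((psiE μ E (S i) (S j) : ℝ) : ℂ) = ∫ x, f i j x ∂μ := by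
      intro i j
      simp only [hf]
      rw [show psiE μ E (S i) (S j) = (μ (A i j)).toReal from rfl,
        ← measureReal_def, ← integral_indicator_one (hAmeas i j)]
      exact integral_ofReal.symm
    have swap : ∑ i, ∑ j, (starRingEnd ℂ) (α i) * α j * (psiE μ E (S i) (S j) : ℂ)
        = ∫ x, ∑ i, ∑ j, (starRingEnd ℂ) (α i) * α j * f i j x ∂μ := by
      rw [integral_finset_sum _ (fun i _ => integrable_finset_sum _
        (fun j _ => ((hint i j).const_mul _)))]
      apply Finset.sum_congr rfl
      intro i _
      rw [integral_finset_sum _ (fun j _ => ((hint i j).const_mul _))]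
      apply Finset.sum_congr rfl
      intro j _
      rw [key i j, integral_const_mul]
    rw [swap]
    set F : X → ℂ := fun x => ∑ i, ∑ j, (starRingEnd ℂ) (α i) * α j * f i j x with hF
    have hpt : ∀ x, 0 ≤ F x := by
      intro x
      have hind : ∀ i j, f i j x
          = if (Quot.mk E ((S i).symm x) : Quot E) = Quot.mk E ((S j).symm x)
            then 1 else 0 := by
        intro i j
        simp only [hf]
        by_cases h : x ∈ A i j
        · rw [Set.indicator_of_mem h, if_pos (Quot.sound h)]
          norm_num
        · rw [Set.indicator_of_notMem h, if_neg]
          · norm_num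
          · intro hq
            exact h ((hEq.quot_mk_eq_iff _ _).mp hq)
      rw [hF]
      simp only [hind]
      exact sum_pd_aux (fun i => (Quot.mk E ((S i).symm x) : Quot E)) α
    have hFint : Integrable F μ :=
      integrable_finset_sum _ (fun i _ => integrable_finset_sum _
        (fun j _ => ((hint i j).const_mul _)))
    have hre : F = fun x => (((F x).re : ℝ) : ℂ) := by
      funext x
      have h := hpt x
      rw [Complex.le_def] at h
      exact Complex.ext rfl (by simpa using h.2.symm)
    calc (0:ℂ) ≤ ((∫ x, (F x).re ∂μ : ℝ) : ℂ) := by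
          apply Complex.zero_le_real.mpr
          apply integral_nonneg
          intro x
          exact (Complex.le_def.mp (hpt x)).1
      _ = ∫ x, (((F x).re : ℝ) : ℂ) ∂μ := integral_ofReal.symm
      _ = ∫ x, F x ∂μ := integral_congr_ae (Filter.Eventually.of_forall
            (fun x => (congrFun hre x).symm))
  constructor
  · exact part1
  · intro n S hS α
    have hφψ : ∀ i j : Fin n, phiE μ E ((S j).trans (S i).symm) = psiE μ E (S i) (S j) := by
      intro i j
      have hmeas : MeasurableSet {x | E ((S i).symm x) ((S j).symm x)} := by
        have : {x | E ((S i).symm x) ((S j).symm x)}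
            = (fun x => (((S i).symm x), ((S j).symm x))) ⁻¹' {p : X × X | E p.1 p.2} := rfl
        rw [this]
        exact ((S i).symm.measurable.prodMk (S j).symm.measurable) hEmeas
      have hpre : (S j) ⁻¹' {x | E ((S i).symm x) ((S j).symm x)}
          = {x | E (((S j).trans (S i).symm) x) x} := by
        ext x
        simp [MeasurableEquiv.trans_apply]
      rw [phiE, psiE, ← hpre, (hS j).measure_preimage hmeas.nullMeasurableSet]
    have h := part1 n S hS α
    simpa only [hφψ] using h
end

section
/- Let (X,μ) be a standard probability space and E a countable, measure-preserving equivalence relation on (X,μ). For every S ∈ Aut(X,μ), 1 − φ_E(S) = inf{δ_u(S,T) : T ∈ [E]}, where δ_u(S,T) = μ({x : S(x) ≠ T(x)}); moreover the infimum is attained: there exists T ∈ [E] with δ_u(S,T) = 1 − φ_E(S). -/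
open MeasureTheory Filter Topology

namespace MPER
open MeasureTheory Function Set

variable {X : Type} [MeasurableSpace X]

/-- integer power of a measurable automorphism, as a function -/
noncomputable def zp (S : X ≃ᵐ X) (n : ℤ) : X → X := fun x => (S.toEquiv ^ n) x

lemma zp_add (S : X ≃ᵐ X) (m n : ℤ) (x : X) : zp S (m + n) x = zp S m (zp S n x) := by
  simp only [zp, zpow_add]; rfl

lemma zp_zero (S : X ≃ᵐ X) (x : X) : zp S 0 x = x := rfl

lemma zp_one (S : X ≃ᵐ X) (x : X) : zp S 1 x = S x := by simp [zp]

lemma zp_symm (S : X ≃ᵐ X) (n : ℤ) (x : X) : zp S.symm n x = zp S (-n) x := by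
  have h : S.symm.toEquiv = (S.toEquiv)⁻¹ := rfl
  simp only [zp, h, inv_zpow, zpow_neg]

lemma zp_neg_one (S : X ≃ᵐ X) (x : X) : zp S (-1) x = S.symm x := by
  rw [← zp_symm, zp_one]

lemma zp_inj (S : X ≃ᵐ X) (n : ℤ) : Function.Injective (zp S n) :=
  (S.toEquiv ^ n).injective

lemma zp_cancel (S : X ≃ᵐ X) (n : ℤ) (x : X) : zp S (-n) (zp S n x) = x := by
  rw [← zp_add]; simp [zp_zero]

lemma measurable_zp (S : X ≃ᵐ X) (n : ℤ) : Measurable (zp S n) := by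
  induction n using Int.induction_on with
  | zero => exact measurable_id
  | succ k ih =>
      have h : zp S ((k : ℤ) + 1) = zp S k ∘ S := by
        funext x; rw [zp_add, zp_one]; rfl
      rw [h]; exact ih.comp S.measurable
  | pred k ih =>
      have h : zp S (-(k : ℤ) - 1) = zp S (-k) ∘ S.symm := by
        funext x; rw [sub_eq_add_neg, zp_add, zp_neg_one]; rfl
      rw [h]; exact ih.comp S.symm.measurable

lemma mp_zp {μ : Measure X} (S : X ≃ᵐ X) (hS : MeasurePreserving S μ μ) (n : ℤ) :
    MeasurePreserving (zp S n) μ μ := by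
  induction n using Int.induction_on with
  | zero => exact MeasurePreserving.id μ
  | succ k ih =>
      have h : zp S ((k : ℤ) + 1) = zp S k ∘ S := by
        funext x; rw [zp_add, zp_one]; rfl
      rw [h]; exact ih.comp hS
  | pred k ih =>
      have h : zp S (-(k : ℤ) - 1) = zp S (-k) ∘ S.symm := by
        funext x; rw [sub_eq_add_neg, zp_add, zp_neg_one]; rfl
      rw [h]; exact ih.comp (hS.symm S)

variable (E : X → X → Prop)

/-- `n` is in the "cell set" of `x`: `S^n x` is `E`-equivalent to `x`. -/
def Zm (S : X ≃ᵐ X) (n : ℤ) (x : X) : Prop := E (zp S n x) x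

def hasPos (S : X ≃ᵐ X) (x : X) : Prop := ∃ n : ℤ, 0 < n ∧ Zm E S n x
def bddA (S : X ≃ᵐ X) (x : X) : Prop := ∃ N : ℤ, ∀ n, N < n → ¬ Zm E S n x
def bddB (S : X ≃ᵐ X) (x : X) : Prop := ∃ N : ℤ, ∀ n, n < N → ¬ Zm E S n x
def Bad (S : X ≃ᵐ X) (x : X) : Prop :=
  (bddA E S x ∧ ¬ bddB E S x) ∨ (bddB E S x ∧ ¬ bddA E S x)

variable {E}

section shift
variable {S : X ≃ᵐ X} {k : ℤ} {x : X}
variable (hEq : Equivalence E)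
include hEq

lemma Zm_shift (hk : Zm E S k x) (n : ℤ) : Zm E S n (zp S k x) ↔ Zm E S (n + k) x := by
  unfold Zm at *
  rw [← zp_add]
  constructor
  · intro h; exact hEq.trans h hk
  · intro h; exact hEq.trans h (hEq.symm hk)

lemma bddA_shift (hk : Zm E S k x) : bddA E S (zp S k x) ↔ bddA E S x := by
  constructor
  · rintro ⟨N, hN⟩; exact ⟨N + k, fun n hn h => hN (n - k) (by omega)
      (((Zm_shift hEq hk (n - k)).trans (by rw [sub_add_cancel])).mpr h)⟩
  · rintro ⟨N, hN⟩; exact ⟨N - k, fun n hn h => hN (n + k) (by omega)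
      ((Zm_shift hEq hk n).mp h)⟩

lemma bddB_shift (hk : Zm E S k x) : bddB E S (zp S k x) ↔ bddB E S x := by
  constructor
  · rintro ⟨N, hN⟩; exact ⟨N + k, fun n hn h => hN (n - k) (by omega)
      (((Zm_shift hEq hk (n - k)).trans (by rw [sub_add_cancel])).mpr h)⟩
  · rintro ⟨N, hN⟩; exact ⟨N - k, fun n hn h => hN (n + k) (by omega)
      ((Zm_shift hEq hk n).mp h)⟩

lemma Bad_shift (hk : Zm E S k x) : Bad E S (zp S k x) ↔ Bad E S x := by
  unfold Bad
  rw [bddA_shift hEq hk, bddB_shift hEq hk]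

end shift

section symmtr
variable {S : X ≃ᵐ X} {x : X}

lemma Zm_symm (n : ℤ) : Zm E S.symm n x ↔ Zm E S (-n) x := by
  unfold Zm; rw [zp_symm]

lemma bddA_symm : bddA E S.symm x ↔ bddB E S x := by
  constructor
  · rintro ⟨N, hN⟩; exact ⟨-N, fun n hn h => hN (-n) (by omega) (by rw [Zm_symm]; simpa)⟩
  · rintro ⟨N, hN⟩; exact ⟨-N, fun n hn h => hN (-n) (by omega) ((Zm_symm n).mp h)⟩

lemma bddB_symm : bddB E S.symm x ↔ bddA E S x := by
  constructor
  · rintro ⟨N, hN⟩; exact ⟨-N, fun n hn h => hN (-n) (by omega) (by rw [Zm_symm]; simpa)⟩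
  · rintro ⟨N, hN⟩; exact ⟨-N, fun n hn h => hN (-n) (by omega) ((Zm_symm n).mp h)⟩

lemma Bad_symm : Bad E S.symm x ↔ Bad E S x := by
  unfold Bad; rw [bddA_symm, bddB_symm]; tauto

end symmtr


-- helper: greatest nat satisfying a bounded nonempty predicate
lemma nat_greatest {P : ℕ → Prop} (h0 : ∃ m, P m) (hb : ∃ b, ∀ m, P m → m ≤ b) :
    ∃ m, P m ∧ ∀ k, m < k → ¬ P k := by
  classical
  obtain ⟨b, hball⟩ := hb
  obtain ⟨m0, hm0⟩ := h0
  refine ⟨Nat.findGreatest P b, Nat.findGreatest_spec (hball m0 hm0) hm0, fun k hk hPk => ?_⟩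
  rcases le_or_gt k b with hkb | hkb
  · exact Nat.findGreatest_is_greatest hk hkb hPk
  · exact absurd (hball k hPk) (by omega)
variable (E : X → X → Prop)

open Classical in
/-- the least positive element of the cell set, when it exists (else 0) -/
noncomputable def posMin (S : X ≃ᵐ X) (x : X) : ℤ :=
  if h : ∃ m : ℕ, Zm E S ((m : ℤ) + 1) x then (Nat.find h : ℤ) + 1 else 0

open Classical in
/-- the least element of the cell set, when the cell set is bounded below and
has no positive element (else 0) -/
noncomputable def minAll (S : X ≃ᵐ X) (x : X) : ℤ :=
  if h : ∃ m : ℕ, Zm E S (-(m : ℤ)) x ∧ ∀ k : ℕ, m < k → ¬ Zm E S (-(k : ℤ)) x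
  then -(Nat.find h : ℤ) else 0

variable {E}
variable {S : X ≃ᵐ X} {x : X}

lemma posMin_spec (h : hasPos E S x) :
    0 < posMin E S x ∧ Zm E S (posMin E S x) x ∧
      ∀ j, 0 < j → j < posMin E S x → ¬ Zm E S j x := by
  classical
  obtain ⟨n, hn, hZ⟩ := h
  have hex : ∃ m : ℕ, Zm E S ((m : ℤ) + 1) x :=
    ⟨(n - 1).toNat, by rwa [show ((n - 1).toNat : ℤ) + 1 = n by omega]⟩
  rw [posMin, dif_pos hex]
  refine ⟨by positivity, Nat.find_spec hex, fun j hj1 hj2 hZj => ?_⟩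
  have := Nat.find_min hex (m := (j - 1).toNat) (by omega)
  exact this (by rwa [show ((j - 1).toNat : ℤ) + 1 = j by omega])

lemma posMin_eq (h : hasPos E S x) {n : ℤ} (h1 : 0 < n) (h2 : Zm E S n x)
    (h3 : ∀ j, 0 < j → j < n → ¬ Zm E S j x) : posMin E S x = n := by
  obtain ⟨p1, p2, p3⟩ := posMin_spec h
  rcases lt_trichotomy (posMin E S x) n with hlt | heq | hgt
  · exact absurd p2 (h3 _ p1 hlt)
  · exact heq
  · exact absurd h2 (p3 _ h1 hgt)

lemma minAll_spec (hrefl : Zm E S 0 x) (h2 : bddB E S x) :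
    minAll E S x ≤ 0 ∧ Zm E S (minAll E S x) x ∧
      ∀ j, j < minAll E S x → ¬ Zm E S j x := by
  classical
  obtain ⟨N, hN⟩ := h2
  have hex : ∃ m : ℕ, Zm E S (-(m : ℤ)) x ∧ ∀ k : ℕ, m < k → ¬ Zm E S (-(k : ℤ)) x := by
    apply nat_greatest ⟨0, by simpa⟩
    refine ⟨(-N).toNat + 1, fun m hm => ?_⟩
    by_contra hc
    exact hN (-(m : ℤ)) (by omega) hm
  rw [minAll, dif_pos hex]
  obtain ⟨q1, q2⟩ := Nat.find_spec hex
  refine ⟨by omega, q1, fun j hj hZj => ?_⟩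
  -- j < -(find) ≤ 0, so j = -(k) with k > find
  have hj0 : j < 0 := by omega
  exact q2 (-j).toNat (by omega) (by rwa [show -(((-j).toNat : ℤ)) = j by omega])

lemma minAll_eq (hrefl : Zm E S 0 x) (h2 : bddB E S x) {n : ℤ}
    (ha : Zm E S n x) (hb : ∀ j, j < n → ¬ Zm E S j x) : minAll E S x = n := by
  obtain ⟨p1, p2, p3⟩ := minAll_spec hrefl h2
  rcases lt_trichotomy (minAll E S x) n with hlt | heq | hgt
  · exact absurd p2 (hb _ hlt)
  · exact heq
  · exact absurd ha (p3 _ hgt)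

variable (E S) in
open Classical in
noncomputable def nuT (x : X) : ℤ :=
  if Bad E S x then 0 else if hasPos E S x then posMin E S x else minAll E S x

variable (E S) in
/-- the candidate element of the full group closest to `S` -/
noncomputable def Tf (x : X) : X := zp S (nuT E S x) x

lemma Zm_nuT (hEq : Equivalence E) (x : X) : Zm E S (nuT E S x) x := by
  classical
  unfold nuT
  split_ifs with h1 h2
  · exact hEq.refl x
  · exact (posMin_spec h2).2.1
  · -- ¬ Bad, ¬ hasPos : cell set is bounded above (by 0); if not bounded below it is Bad
    have hA : bddA E S x := ⟨0, fun n hn hZ => h2 ⟨n, hn, hZ⟩⟩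
    have hB : bddB E S x := by
      by_contra hB
      exact h1 (Or.inl ⟨hA, hB⟩)
    exact (minAll_spec (hEq.refl x) hB).2.1
section
variable {S : X ≃ᵐ X} {x : X}

lemma nuT_bad (hb : Bad E S x) : nuT E S x = 0 := by unfold nuT; rw [if_pos hb]
lemma nuT_pos (hb : ¬ Bad E S x) (hp : hasPos E S x) : nuT E S x = posMin E S x := by
  unfold nuT; rw [if_neg hb, if_pos hp]
lemma nuT_min (hb : ¬ Bad E S x) (hp : ¬ hasPos E S x) : nuT E S x = minAll E S x := by
  unfold nuT; rw [if_neg hb, if_neg hp]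

lemma Tf_def (S : X ≃ᵐ X) (x : X) : Tf E S x = zp S (nuT E S x) x := rfl

end

lemma Tf_comp (hEq : Equivalence E) (S : X ≃ᵐ X) (x : X) :
    Tf E S.symm (Tf E S x) = x := by
  classical
  by_cases hb : Bad E S x
  · have h1 : Tf E S x = x := by rw [Tf_def, nuT_bad hb, zp_zero]
    have hb' : Bad E S.symm x := Bad_symm.mpr hb
    rw [h1, Tf_def, nuT_bad hb', zp_zero]
  · set k := nuT E S x with hk
    have hzk : Zm E S k x := Zm_nuT hEq x
    have hy : Tf E S x = zp S k x := rfl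
    set y := zp S k x with hydef
    have hshift : ∀ n, Zm E S n y ↔ Zm E S (n + k) x := Zm_shift hEq hzk
    have hbady : ¬ Bad E S y := by rw [Bad_shift hEq hzk]; exact hb
    have hbady' : ¬ Bad E S.symm y := fun h => hbady (Bad_symm.mp h)
    have hx0 : Zm E S 0 x := hEq.refl x
    by_cases hp : hasPos E S x
    · obtain ⟨hk1, hk2, hk3⟩ := posMin_spec hp
      rw [← nuT_pos hb hp, ← hk] at hk1 hk2 hk3
      have hZnegk : Zm E S.symm k y := by
        rw [Zm_symm, hshift, neg_add_cancel]; exact hx0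
      have hpy : hasPos E S.symm y := ⟨k, hk1, hZnegk⟩
      have hmin : posMin E S.symm y = k := by
        refine posMin_eq hpy hk1 hZnegk (fun j hj1 hj2 hZj => ?_)
        rw [Zm_symm, hshift] at hZj
        exact hk3 (-j + k) (by omega) (by omega) hZj
      rw [hy, Tf_def, nuT_pos hbady' hpy, hmin, zp_symm, hydef, zp_cancel]
    · have hA : bddA E S x := ⟨0, fun n hn hZ => hp ⟨n, hn, hZ⟩⟩
      have hB : bddB E S x := by
        by_contra hB; exact hb (Or.inl ⟨hA, hB⟩)
      obtain ⟨hm1, hm2, hm3⟩ := minAll_spec hx0 hB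
      rw [← nuT_min hb hp, ← hk] at hm1 hm2 hm3
      have hpy : ¬ hasPos E S.symm y := by
        rintro ⟨n, hn, hZ⟩
        rw [Zm_symm, hshift] at hZ
        exact hm3 _ (by omega) hZ
      have hBy : bddB E S.symm y := bddB_symm.mpr ((bddA_shift hEq hzk).mpr hA)
      have hmin : minAll E S.symm y = k := by
        refine minAll_eq (hEq.refl y) hBy ?_ (fun j hj hZj => ?_)
        · rw [Zm_symm, hshift, neg_add_cancel]; exact hx0
        · rw [Zm_symm, hshift] at hZj
          exact hp ⟨-j + k, by omega, hZj⟩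
      rw [hy, Tf_def, nuT_min hbady' hpy, hmin, zp_symm, hydef, zp_cancel]

lemma Zm_Tf (hEq : Equivalence E) (S : X ≃ᵐ X) (x : X) : E (Tf E S x) x :=
  Zm_nuT hEq x


section meas
variable {S : X ≃ᵐ X} (hmE : MeasurableSet {p : X × X | E p.1 p.2})
include hmE

lemma measurableSet_Zm (n : ℤ) : MeasurableSet {x | Zm E S n x} := by
  have h : {x | Zm E S n x} = (fun x => (zp S n x, x)) ⁻¹' {p : X × X | E p.1 p.2} := rfl
  rw [h]; exact ((measurable_zp S n).prodMk measurable_id) hmE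

lemma measurableSet_hasPos : MeasurableSet {x | hasPos E S x} := by
  have h : {x | hasPos E S x} = ⋃ n ∈ {n : ℤ | 0 < n}, {x | Zm E S n x} := by
    ext x; simp [hasPos, mem_iUnion]
  rw [h]
  exact MeasurableSet.biUnion (to_countable _) fun n _ => measurableSet_Zm hmE n

lemma measurableSet_bddA : MeasurableSet {x | bddA E S x} := by
  have h : {x | bddA E S x} = ⋃ N : ℤ, ⋂ n ∈ {n : ℤ | N < n}, {x | Zm E S n x}ᶜ := by
    ext x; simp [bddA, mem_iUnion, mem_iInter]
  rw [h]
  exact MeasurableSet.iUnion fun N => MeasurableSet.biInter (to_countable _)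
    fun n _ => (measurableSet_Zm hmE n).compl

lemma measurableSet_bddB : MeasurableSet {x | bddB E S x} := by
  have h : {x | bddB E S x} = ⋃ N : ℤ, ⋂ n ∈ {n : ℤ | n < N}, {x | Zm E S n x}ᶜ := by
    ext x; simp [bddB, mem_iUnion, mem_iInter]
  rw [h]
  exact MeasurableSet.iUnion fun N => MeasurableSet.biInter (to_countable _)
    fun n _ => (measurableSet_Zm hmE n).compl

lemma measurableSet_Bad : MeasurableSet {x | Bad E S x} := by
  have h : {x | Bad E S x} = ({x | bddA E S x} ∩ {x | bddB E S x}ᶜ) ∪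
      ({x | bddB E S x} ∩ {x | bddA E S x}ᶜ) := by
    ext x; simp [Bad]
  rw [h]
  exact ((measurableSet_bddA hmE).inter (measurableSet_bddB hmE).compl).union
    ((measurableSet_bddB hmE).inter (measurableSet_bddA hmE).compl)

end meas

section meas2
variable {S : X ≃ᵐ X} {x : X}

lemma hasPos_iff_nat : hasPos E S x ↔ ∃ m : ℕ, Zm E S ((m : ℤ) + 1) x := by
  constructor
  · rintro ⟨n, hn, hZ⟩
    exact ⟨(n - 1).toNat, by rwa [show ((n - 1).toNat : ℤ) + 1 = n by omega]⟩
  · rintro ⟨m, hZ⟩; exact ⟨(m : ℤ) + 1, by positivity, hZ⟩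

lemma posMin_nonneg : 0 ≤ posMin E S x := by
  classical
  unfold posMin; split_ifs with h
  · positivity
  · exact le_refl _

lemma posMin_eq_zero_of_not (h : ¬ hasPos E S x) : posMin E S x = 0 := by
  classical
  unfold posMin
  rw [dif_neg (fun hc => h (hasPos_iff_nat.mpr hc))]

lemma posMin_eq_iff_pos {n : ℤ} (hn : 0 < n) :
    posMin E S x = n ↔ Zm E S n x ∧ ∀ j, 0 < j → j < n → ¬ Zm E S j x := by
  constructor
  · intro h
    by_cases hp : hasPos E S x
    · obtain ⟨p1, p2, p3⟩ := posMin_spec hp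
      rw [h] at p2 p3
      exact ⟨p2, p3⟩
    · rw [posMin_eq_zero_of_not hp] at h; omega
  · rintro ⟨h1, h2⟩
    exact posMin_eq ⟨n, hn, h1⟩ hn h1 h2

lemma minAll_nonpos : minAll E S x ≤ 0 := by
  classical
  unfold minAll; split_ifs with h
  · omega
  · exact le_refl _

lemma minAll_eq_iff_neg {n : ℤ} (hn : n < 0) :
    minAll E S x = n ↔ Zm E S n x ∧ ∀ j, j < n → ¬ Zm E S j x := by
  classical
  unfold minAll
  have hP : (Zm E S (-(((-n).toNat : ℕ) : ℤ)) x ∧ ∀ k : ℕ, (-n).toNat < k → ¬ Zm E S (-(k : ℤ)) x)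
      ↔ (Zm E S n x ∧ ∀ j, j < n → ¬ Zm E S j x) := by
    constructor
    · rintro ⟨h1, h2⟩
      refine ⟨by rwa [show -(((-n).toNat : ℕ) : ℤ) = n by omega] at h1, fun j hj hZ => ?_⟩
      exact h2 (-j).toNat (by omega) (by rwa [show -(((-j).toNat : ℕ) : ℤ) = j by omega])
    · rintro ⟨h1, h2⟩
      refine ⟨by rwa [show -(((-n).toNat : ℕ) : ℤ) = n by omega], fun k hk hZ => ?_⟩
      exact h2 (-(k : ℤ)) (by omega) hZ
  split_ifs with h
  · obtain ⟨q1, q2⟩ := Nat.find_spec h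
    constructor
    · intro heq
      apply hP.mp
      rw [show (-n).toNat = Nat.find h by omega]
      exact ⟨q1, q2⟩
    · intro hr
      have hPn := hP.mpr hr
      have hle : Nat.find h ≤ (-n).toNat := Nat.find_min' h hPn
      rcases eq_or_lt_of_le hle with heq | hlt
      · omega
      · exact absurd hPn.1 (q2 _ hlt)
  · constructor
    · intro h0; omega
    · intro hr; exact absurd ⟨(-n).toNat, hP.mpr hr⟩ h
end meas2

section meas3
variable {S : X ≃ᵐ X} (hmE : MeasurableSet {p : X × X | E p.1 p.2})
include hmE

lemma measurable_posMin : Measurable (posMin E S) := by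
  apply measurable_to_countable'
  intro n
  rcases lt_trichotomy n 0 with hn | hn | hn
  · have h : posMin E S ⁻¹' {n} = ∅ := by
      ext x; simp only [mem_preimage, mem_singleton_iff, mem_empty_iff_false, iff_false]
      intro hc; have := posMin_nonneg (E := E) (S := S) (x := x); omega
    rw [h]; exact MeasurableSet.empty
  · subst hn
    have h : posMin E S ⁻¹' {0} = {x | hasPos E S x}ᶜ := by
      ext x
      simp only [mem_preimage, mem_singleton_iff, mem_compl_iff, mem_setOf_eq]
      constructor
      · intro h hp; have := (posMin_spec hp).1; omega
      · exact posMin_eq_zero_of_not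
    rw [h]; exact (measurableSet_hasPos hmE).compl
  · have h : posMin E S ⁻¹' {n} =
        {x | Zm E S n x} ∩ ⋂ j ∈ {j : ℤ | 0 < j ∧ j < n}, {x | Zm E S j x}ᶜ := by
      ext x
      simp only [mem_preimage, mem_singleton_iff, mem_inter_iff, mem_setOf_eq, mem_iInter,
        mem_compl_iff, posMin_eq_iff_pos hn]
      tauto
    rw [h]
    exact (measurableSet_Zm hmE n).inter (MeasurableSet.biInter (to_countable _)
      fun j _ => (measurableSet_Zm hmE j).compl)

lemma measurable_minAll : Measurable (minAll E S) := by
  apply measurable_to_countable'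
  intro n
  rcases lt_trichotomy n 0 with hn | hn | hn
  · have h : minAll E S ⁻¹' {n} =
        {x | Zm E S n x} ∩ ⋂ j ∈ {j : ℤ | j < n}, {x | Zm E S j x}ᶜ := by
      ext x
      simp only [mem_preimage, mem_singleton_iff, mem_inter_iff, mem_setOf_eq, mem_iInter,
        mem_compl_iff, minAll_eq_iff_neg hn]
    rw [h]
    exact (measurableSet_Zm hmE n).inter (MeasurableSet.biInter (to_countable _)
      fun j _ => (measurableSet_Zm hmE j).compl)
  · subst hn
    have h : minAll E S ⁻¹' {0} = (⋃ m ∈ {m : ℤ | m < 0}, minAll E S ⁻¹' {m})ᶜ := by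
      ext x
      simp only [mem_preimage, mem_singleton_iff, mem_compl_iff, mem_iUnion, mem_setOf_eq]
      constructor
      · rintro h ⟨m, hm, hmx⟩; omega
      · intro h
        have := minAll_nonpos (E := E) (S := S) (x := x)
        rcases eq_or_lt_of_le this with heq | hlt
        · exact heq
        · exact absurd ⟨minAll E S x, hlt, rfl⟩ h
    rw [h]
    -- measurable since each fiber for m < 0 is measurable by the previous case
    apply MeasurableSet.compl
    apply MeasurableSet.biUnion (to_countable _)
    intro m hm
    have h2 : minAll E S ⁻¹' {m} =
        {x | Zm E S m x} ∩ ⋂ j ∈ {j : ℤ | j < m}, {x | Zm E S j x}ᶜ := by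
      ext x
      simp only [mem_preimage, mem_singleton_iff, mem_inter_iff, mem_setOf_eq, mem_iInter,
        mem_compl_iff, minAll_eq_iff_neg hm]
    rw [h2]
    exact (measurableSet_Zm hmE m).inter (MeasurableSet.biInter (to_countable _)
      fun j _ => (measurableSet_Zm hmE j).compl)
  · have h : minAll E S ⁻¹' {n} = ∅ := by
      ext x; simp only [mem_preimage, mem_singleton_iff, mem_empty_iff_false, iff_false]
      intro hc; have := minAll_nonpos (E := E) (S := S) (x := x); omega
    rw [h]; exact MeasurableSet.empty

lemma measurable_nuT : Measurable (nuT E S) := by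
  unfold nuT
  exact Measurable.ite (measurableSet_Bad hmE) measurable_const
    (Measurable.ite (measurableSet_hasPos hmE) (measurable_posMin hmE)
      (measurable_minAll hmE))

omit hmE in
lemma measurable_plug {ν : X → ℤ} (hν : Measurable ν) :
    Measurable (fun x => zp S (ν x) x) := by
  intro t ht
  have h : (fun x => zp S (ν x) x) ⁻¹' t = ⋃ n : ℤ, (ν ⁻¹' {n}) ∩ (zp S n ⁻¹' t) := by
    ext x
    simp only [mem_preimage, mem_iUnion, mem_inter_iff, mem_singleton_iff]
    constructor
    · intro hx; exact ⟨ν x, rfl, hx⟩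
    · rintro ⟨n, rfl, hx⟩; exact hx
  rw [h]
  exact MeasurableSet.iUnion fun n =>
    (hν (measurableSet_singleton n)).inter (measurable_zp S n ht)

lemma measurable_Tf : Measurable (Tf E S) :=
  measurable_plug (measurable_nuT hmE)

end meas3


section key
variable [StandardBorelSpace X] {μ : Measure X}

lemma measurableSet_image_of_injOn {f : X → X} (hf : Measurable f) {B : Set X}
    (hB : MeasurableSet B) (hinj : Set.InjOn f B) : MeasurableSet (f '' B) := by
  haveI := hB.standardBorel
  have emb : MeasurableEmbedding (fun d : B => f d) :=
    (hf.comp measurable_subtype_coe).measurableEmbedding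
      (fun a b hab => Subtype.ext (hinj a.2 b.2 hab))
  have h : f '' B = Set.range (fun d : B => f d) := by
    ext y; simp [Set.mem_image]
  rw [h]; exact emb.measurableSet_range

lemma measurableSet_eq_fun' {u v : X → X} (hu : Measurable u) (hv : Measurable v) :
    MeasurableSet {x | u x = v x} := by
  obtain ⟨g, gm, gi⟩ := MeasurableSpace.measurable_injection_nat_bool_of_countablySeparated X
  have h : {x | u x = v x} = ⋂ i : ℕ, {x | g (u x) i = g (v x) i} := by
    ext x
    simp only [mem_setOf_eq, mem_iInter]
    constructor
    · intro h i; rw [h]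
    · intro h; exact gi (funext h)
  rw [h]
  refine MeasurableSet.iInter fun i => ?_
  have hu' : Measurable fun x => g (u x) i := (measurable_pi_apply i).comp (gm.comp hu)
  have hv' : Measurable fun x => g (v x) i := (measurable_pi_apply i).comp (gm.comp hv)
  have h2 : {x | g (u x) i = g (v x) i} =
      (fun x => (g (u x) i, g (v x) i)) ⁻¹' {p : Bool × Bool | p.1 = p.2} := rfl
  rw [h2]
  exact (hu'.prodMk hv') (Set.Countable.measurableSet (to_countable _))

variable {E : X → X → Prop}

lemma key_piece (hEq : Equivalence E)
    (hfull : ∀ T : X ≃ᵐ X, (∀ x, E (T x) x) → MeasurePreserving T μ μ)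
    {f : X → X} (hf : Measurable f) {D : Set X} (hD : MeasurableSet D)
    (hinj : Set.InjOn f D) (hgraph : ∀ x ∈ D, E (f x) x)
    (hdis : Disjoint D (f '' D)) : μ (f '' D) = μ D := by
  classical
  rcases D.eq_empty_or_nonempty with rfl | ⟨x0, hx0⟩
  · simp
  haveI : Nonempty X := ⟨x0⟩
  have hDF : ∀ y ∈ f '' D, y ∉ D := fun y hy hyD => hdis.ne_of_mem hyD hy rfl
  have hFD : ∀ x ∈ D, f x ∉ D := fun x hx => hDF _ (Set.mem_image_of_mem f hx)
  set invf := Function.invFunOn f D with hinvf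
  have hinv1 : ∀ x ∈ D, invf (f x) = x := fun x hx => hinj.leftInvOn_invFunOn hx
  have hinv2 : ∀ y ∈ f '' D, invf y ∈ D ∧ f (invf y) = y := by
    intro y hy
    obtain ⟨a, ha, rfl⟩ := hy
    exact ⟨Function.invFunOn_mem ⟨a, ha, rfl⟩, Function.invFunOn_eq ⟨a, ha, rfl⟩⟩
  set τ : X → X := fun x => if x ∈ D then f x else if x ∈ f '' D then invf x else x with hτ
  have him : ∀ t : Set X, MeasurableSet t → MeasurableSet (f '' (D ∩ t)) := fun t ht =>
    measurableSet_image_of_injOn hf (hD.inter ht) (hinj.mono Set.inter_subset_left)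
  have himD : MeasurableSet (f '' D) := measurableSet_image_of_injOn hf hD hinj
  -- values of τ
  have hτD : ∀ x ∈ D, τ x = f x := fun x hx => by simp only [hτ, if_pos hx]
  have hτF : ∀ x ∈ f '' D, τ x = invf x := fun x hx => by
    simp only [hτ, if_neg (hDF x hx), if_pos hx]
  have hτO : ∀ x, x ∉ D → x ∉ f '' D → τ x = x := fun x h1 h2 => by
    simp only [hτ, if_neg h1, if_neg h2]
  have hinvol : Function.Involutive τ := by
    intro x
    by_cases h1 : x ∈ D
    · rw [hτD x h1]
      have h2 : f x ∈ f '' D := Set.mem_image_of_mem f h1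
      rw [hτF _ h2, hinv1 x h1]
    · by_cases h2 : x ∈ f '' D
      · rw [hτF x h2]
        obtain ⟨hd, hfd⟩ := hinv2 x h2
        rw [hτD _ hd, hfd]
      · rw [hτO x h1 h2, hτO x h1 h2]
  have hτmeas : Measurable τ := by
    intro t ht
    have h : τ ⁻¹' t = (D ∩ f ⁻¹' t) ∪ (f '' (D ∩ t)) ∪ (t \ (D ∪ f '' D)) := by
      ext x
      by_cases h1 : x ∈ D
      · have h2 : x ∉ f '' (D ∩ t) := fun hc =>
          hDF x (Set.image_mono (f := f) Set.inter_subset_left hc) h1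
        simp only [Set.mem_preimage, hτD x h1, Set.mem_union, Set.mem_inter_iff,
          Set.mem_preimage, Set.mem_diff, Set.mem_union]
        tauto
      · by_cases h2 : x ∈ f '' D
        · have hval : τ x = invf x := hτF x h2
          obtain ⟨hd, hfd⟩ := hinv2 x h2
          simp only [Set.mem_preimage, hval, Set.mem_union, Set.mem_inter_iff,
            Set.mem_preimage, Set.mem_diff, Set.mem_union]
          constructor
          · intro hi
            exact Or.inl (Or.inr ⟨invf x, ⟨hd, hi⟩, hfd⟩)
          · rintro ((⟨hD1, _⟩ | ⟨d, ⟨hd1, hd2⟩, rfl⟩) | ⟨_, hno⟩)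
            · exact absurd hD1 h1
            · rwa [hinv1 d hd1]
            · exact absurd (Or.inr h2) hno
        · have h3 : x ∉ f '' (D ∩ t) := fun hc =>
            h2 (Set.image_mono (f := f) Set.inter_subset_left hc)
          simp only [Set.mem_preimage, hτO x h1 h2, Set.mem_union, Set.mem_inter_iff,
            Set.mem_preimage, Set.mem_diff, Set.mem_union]
          tauto
    rw [h]
    exact ((hD.inter (hf ht)).union (him t ht)).union
      ((ht.diff (hD.union himD)))
  set τe : X ≃ᵐ X :=
    { toEquiv := hinvol.toPerm τ
      measurable_toFun := hτmeas
      measurable_invFun := hτmeas } with hτe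
  have hEτ : ∀ x, E (τe x) x := by
    intro x
    show E (τ x) x
    by_cases h1 : x ∈ D
    · rw [hτD x h1]; exact hgraph x h1
    · by_cases h2 : x ∈ f '' D
      · rw [hτF x h2]
        obtain ⟨hd, hfd⟩ := hinv2 x h2
        have := hgraph _ hd
        rw [hfd] at this
        exact hEq.symm this
      · rw [hτO x h1 h2]; exact hEq.refl x
  have hmp := hfull τe hEτ
  have hpre : τe ⁻¹' (f '' D) = D := by
    ext x
    simp only [Set.mem_preimage]
    show τ x ∈ f '' D ↔ x ∈ D
    by_cases h1 : x ∈ D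
    · simp only [h1, iff_true, hτD x h1]
      exact Set.mem_image_of_mem f h1
    · by_cases h2 : x ∈ f '' D
      · rw [hτF x h2]
        obtain ⟨hd, _⟩ := hinv2 x h2
        simp only [h1, iff_false]
        exact fun hc => hDF _ hc hd
      · rw [hτO x h1 h2]; simp only [h1, iff_false]; exact h2
  calc μ (f '' D) = μ (τe ⁻¹' (f '' D)) := (hmp.measure_preimage himD.nullMeasurableSet).symm
  _ = μ D := by rw [hpre]

end key


section key2
variable [StandardBorelSpace X] {μ : Measure X} {E : X → X → Prop}

/-- Any Borel partial injection whose graph lies in `E` is measure preserving. -/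
lemma key (hEq : Equivalence E)
    (hfull : ∀ T : X ≃ᵐ X, (∀ x, E (T x) x) → MeasurePreserving T μ μ)
    {f : X → X} (hf : Measurable f) {B : Set X} (hB : MeasurableSet B)
    (hinj : Set.InjOn f B) (hgraph : ∀ x ∈ B, E (f x) x) : μ (f '' B) = μ B := by
  classical
  obtain ⟨g, gm, gi⟩ := MeasurableSpace.measurable_injection_nat_bool_of_countablySeparated X
  set Fix : Set X := B ∩ {x | f x = x} with hFix
  have hFixm : MeasurableSet Fix := hB.inter (measurableSet_eq_fun' hf measurable_id)
  have hFixim : f '' Fix = Fix := by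
    ext y
    constructor
    · rintro ⟨x, ⟨hx1, hx2⟩, rfl⟩
      rw [mem_setOf_eq] at hx2
      rw [hx2]; exact ⟨hx1, hx2⟩
    · rintro ⟨hy1, hy2⟩
      rw [mem_setOf_eq] at hy2
      exact ⟨y, ⟨hy1, hy2⟩, hy2⟩
  -- pieces
  set M : ℕ × Bool → Set X := fun p =>
    {x | x ∈ B ∧ f x ≠ x ∧ g x p.1 = p.2 ∧ g (f x) p.1 = !p.2} with hM
  have hMm : ∀ p, MeasurableSet (M p) := by
    intro p
    have h1 : MeasurableSet {x | g x p.1 = p.2} :=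
      ((measurable_pi_apply p.1).comp gm) (measurableSet_singleton p.2)
    have h2 : MeasurableSet {x | g (f x) p.1 = !p.2} :=
      ((measurable_pi_apply p.1).comp (gm.comp hf)) (measurableSet_singleton (!p.2))
    have h3 : MeasurableSet {x | f x ≠ x} := (measurableSet_eq_fun' hf measurable_id).compl
    exact (hB.inter (h3.inter (h1.inter h2))).congr (by ext x; simp [hM]; tauto)
  have hMcov : ∀ x ∈ B, f x ≠ x → ∃ p, x ∈ M p := by
    intro x hx hfx
    have hne : g (f x) ≠ g x := fun hc => hfx (gi hc)
    have : ∃ i, g (f x) i ≠ g x i := by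
      by_contra hc
      push_neg at hc
      exact hne (funext hc)
    obtain ⟨i, hi⟩ := this
    refine ⟨(i, g x i), hx, hfx, rfl, ?_⟩
    cases hgx : g x i <;> cases hgfx : g (f x) i <;> simp_all
  have hMdis : ∀ p, Disjoint (M p) (f '' (M p)) := by
    intro p
    rw [Set.disjoint_left]
    rintro y ⟨_, _, hy3, _⟩ ⟨x, ⟨_, _, _, hx4⟩, rfl⟩
    rw [hy3] at hx4
    simp at hx4
  -- disjointify
  set e : ℕ → ℕ × Bool := fun k => (k / 2, decide (k % 2 = 0)) with he
  have hesurj : ∀ p : ℕ × Bool, ∃ k, e k = p := by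
    rintro ⟨i, b⟩
    cases b
    · have h1 : (2*i+1)/2 = i := by omega
      have h2 : (2*i+1) % 2 = 1 := by omega
      exact ⟨2*i+1, by simp [he, h1, h2]⟩
    · have h1 : (2*i)/2 = i := by omega
      have h2 : (2*i) % 2 = 0 := by omega
      exact ⟨2*i, by simp [he, h1, h2]⟩
  set N : ℕ → Set X := disjointed (fun k => M (e k)) with hN
  have hNm : ∀ k, MeasurableSet (N k) := MeasurableSet.disjointed (fun k => hMm (e k))
  have hNsub : ∀ k, N k ⊆ M (e k) := disjointed_subset _
  have hNBsub : ∀ k, N k ⊆ B := fun k x hx => ((hNsub k) hx).1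
  have hNdis : Pairwise (Disjoint on N) := disjoint_disjointed _
  have hNcov : B = Fix ∪ ⋃ k, N k := by
    rw [hN, iUnion_disjointed]
    ext x
    constructor
    · intro hx
      by_cases hfx : f x = x
      · exact Or.inl ⟨hx, hfx⟩
      · obtain ⟨p, hp⟩ := hMcov x hx hfx
        obtain ⟨k, hk⟩ := hesurj p
        exact Or.inr (mem_iUnion.mpr ⟨k, by rw [hk]; exact hp⟩)
    · rintro (⟨hx, _⟩ | hx)
      · exact hx
      · obtain ⟨k, hk⟩ := mem_iUnion.mp hx
        exact hk.1
  have hkey : ∀ k, μ (f '' N k) = μ (N k) := fun k =>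
    key_piece hEq hfull hf (hNm k) (hinj.mono (hNBsub k))
      (fun x hx => hgraph x (hNBsub k hx))
      (Set.disjoint_of_subset (hNsub k) (Set.image_mono (f := f) (hNsub k)) (hMdis (e k)))
  -- images
  have hNim : ∀ k, MeasurableSet (f '' N k) := fun k =>
    measurableSet_image_of_injOn hf (hNm k) (hinj.mono (hNBsub k))
  have hNimdis : Pairwise (Disjoint on fun k => f '' N k) := by
    intro i j hij
    have h := hNdis hij
    rw [Function.onFun, Set.disjoint_left] at h ⊢
    rintro y ⟨a, ha, rfl⟩ ⟨b, hb, hba⟩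
    have : b = a := hinj (hNBsub j hb) (hNBsub i ha) hba
    exact h ha (this ▸ hb)
  have hFixdis : Disjoint Fix (⋃ k, N k) := by
    rw [Set.disjoint_left]
    rintro x ⟨_, hx2⟩ hx3
    obtain ⟨k, hk⟩ := mem_iUnion.mp hx3
    exact ((hNsub k) hk).2.1 hx2
  have hFiximdis : Disjoint Fix (⋃ k, f '' N k) := by
    rw [Set.disjoint_left]
    rintro x ⟨hx1, hx2⟩ hx3
    rw [mem_setOf_eq] at hx2
    obtain ⟨k, hk⟩ := mem_iUnion.mp hx3
    obtain ⟨a, ha, rfl⟩ := hk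
    have : a = f a := hinj (hNBsub k ha) (by rw [← hx2] at hx1 ⊢; exact hx1) hx2.symm
    exact ((hNsub k) ha).2.1 (by rw [← this] at hx2; exact hx2)
  have himB : f '' B = Fix ∪ ⋃ k, f '' N k := by
    rw [hNcov, Set.image_union, hFixim, Set.image_iUnion]
  -- compute
  rw [himB, hNcov]
  rw [measure_union hFiximdis (MeasurableSet.iUnion hNim),
      measure_union hFixdis (MeasurableSet.iUnion hNm),
      measure_iUnion hNimdis hNim, measure_iUnion hNdis hNm]
  exact congrArg (μ Fix + ·) (tsum_congr hkey)

end key2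


section badnull
variable {μ : Measure X}

variable (E) in
/-- minima of upward-infinite cells -/
def Bset (S : X ≃ᵐ X) : Set X :=
  {x | (∀ n : ℤ, n < 0 → ¬ Zm E S n x) ∧ ¬ bddA E S x}

variable {S : X ≃ᵐ X}

lemma measurableSet_Bset (hmE : MeasurableSet {p : X × X | E p.1 p.2}) :
    MeasurableSet (Bset E S) := by
  have h : Bset E S = (⋂ n ∈ {n : ℤ | n < 0}, {x | Zm E S n x}ᶜ) ∩ {x | bddA E S x}ᶜ := by
    ext x; simp [Bset, mem_iInter]
  rw [h]
  exact (MeasurableSet.biInter (to_countable _) fun n _ =>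
    (measurableSet_Zm hmE n).compl).inter (measurableSet_bddA hmE).compl

lemma not_bddA_exists {x : X} (h : ¬ bddA E S x) (n : ℤ) : ∃ j, n < j ∧ Zm E S j x := by
  by_contra hc
  push_neg at hc
  exact h ⟨n, hc⟩

variable (E S) in
/-- the `k`-th element of the cell of `x` (viewed from `x`) -/
noncomputable def ek : ℕ → X → ℤ
  | 0 => fun _ => 0
  | (k+1) => fun x => ek k x + posMin E S (zp S (ek k x) x)

lemma measurable_ek (hmE : MeasurableSet {p : X × X | E p.1 p.2}) (k : ℕ) :
    Measurable (ek E S k) := by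
  induction k with
  | zero => exact measurable_const
  | succ k ih =>
      show Measurable fun x => ek E S k x + posMin E S (zp S (ek E S k x) x)
      exact ih.add ((measurable_posMin hmE).comp (measurable_plug ih))

lemma hasPos_shift_of_Bset (hEq : Equivalence E) {x : X} (hx : x ∈ Bset E S) {n : ℤ}
    (hn : Zm E S n x) : hasPos E S (zp S n x) := by
  obtain ⟨j, hj, hZj⟩ := not_bddA_exists hx.2 n
  refine ⟨j - n, by omega, ?_⟩
  rw [Zm_shift hEq hn, sub_add_cancel]
  exact hZj

lemma ek_zm (hEq : Equivalence E) {x : X} (hx : x ∈ Bset E S) (k : ℕ) :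
    Zm E S (ek E S k x) x := by
  induction k with
  | zero => exact hEq.refl x
  | succ k ih =>
      have hp := hasPos_shift_of_Bset hEq hx ih
      have p2 := (posMin_spec hp).2.1
      rw [Zm_shift hEq ih] at p2
      show Zm E S (ek E S k x + posMin E S (zp S (ek E S k x) x)) x
      rwa [add_comm]

lemma ek_lt (hEq : Equivalence E) {x : X} (hx : x ∈ Bset E S) (k : ℕ) :
    ek E S k x < ek E S (k+1) x := by
  have hp := hasPos_shift_of_Bset hEq hx (ek_zm hEq hx k)
  have p1 := (posMin_spec hp).1
  show ek E S k x < ek E S k x + posMin E S (zp S (ek E S k x) x)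
  omega

lemma ek_strictMono (hEq : Equivalence E) {x : X} (hx : x ∈ Bset E S) :
    StrictMono (fun k => ek E S k x) :=
  strictMono_nat_of_lt_succ (ek_lt hEq hx)

lemma Bset_rigid (hEq : Equivalence E) {x y : X} (hx : x ∈ Bset E S) (hy : y ∈ Bset E S)
    {d : ℤ} (hd : Zm E S d x) (hyx : y = zp S d x) : d = 0 := by
  rcases lt_trichotomy d 0 with hlt | heq | hgt
  · exact absurd hd (hx.1 d hlt)
  · exact heq
  · exfalso
    have h : Zm E S (-d) y := by
      rw [hyx, Zm_shift hEq hd, neg_add_cancel]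
      exact hEq.refl x
    exact hy.1 (-d) (by omega) h

lemma Bset_null [StandardBorelSpace X] [IsProbabilityMeasure μ] (hEq : Equivalence E)
    (hmE : MeasurableSet {p : X × X | E p.1 p.2})
    (hfull : ∀ T : X ≃ᵐ X, (∀ x, E (T x) x) → MeasurePreserving T μ μ) :
    μ (Bset E S) = 0 := by
  set B := Bset E S with hB
  set f : ℕ → X → X := fun k x => zp S (ek E S k x) x with hf
  have hfm : ∀ k, Measurable (f k) := fun k => measurable_plug (measurable_ek hmE k)
  have hgraph : ∀ k, ∀ x ∈ B, E (f k x) x := fun k x hx => ek_zm hEq hx k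
  -- common-value rigidity
  have hrigid : ∀ k j : ℕ, ∀ x ∈ B, ∀ y ∈ B, f k x = f j y → x = y ∧ k = j := by
    intro k j x hx y hy heqv
    have hEx : E (f k x) x := hgraph k x hx
    have hEy : E (f j y) y := hgraph j y hy
    have hExy : E y x := hEq.trans (hEq.symm (heqv ▸ hEy)) hEx
    have hyzp : y = zp S (ek E S k x - ek E S j y) x := by
      apply zp_inj S (ek E S j y)
      rw [← zp_add, show ek E S j y + (ek E S k x - ek E S j y) = ek E S k x by ring]
      exact heqv.symm
    have hd : Zm E S (ek E S k x - ek E S j y) x := by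
      unfold Zm
      rw [← hyzp]
      exact hExy
    have hd0 := Bset_rigid hEq hx hy hd hyzp
    have hxy : x = y := by
      rw [hyzp, show ek E S k x - ek E S j y = 0 from hd0, zp_zero]
    subst hxy
    have : ek E S k x = ek E S j x := by omega
    exact ⟨rfl, (ek_strictMono hEq hx).injective this⟩
  have hinj : ∀ k, Set.InjOn (f k) B := fun k x hx y hy h => ((hrigid k k x hx y hy) h).1
  have hBm : MeasurableSet B := measurableSet_Bset hmE
  have hkey : ∀ k, μ (f k '' B) = μ B := fun k =>
    key hEq hfull (hfm k) hBm (hinj k) (hgraph k)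
  have himdis : Pairwise (Disjoint on fun k => f k '' B) := by
    intro k j hkj
    rw [Function.onFun, Set.disjoint_left]
    rintro u ⟨x, hx, rfl⟩ ⟨y, hy, hyy⟩
    exact hkj (((hrigid j k y hy x hx) hyy).2).symm
  have himm : ∀ k, MeasurableSet (f k '' B) := fun k =>
    measurableSet_image_of_injOn (hfm k) hBm (hinj k)
  by_contra hc
  have h1 : μ (⋃ k, f k '' B) = ∑' k : ℕ, μ B := by
    rw [measure_iUnion himdis himm]
    exact tsum_congr hkey
  have h2 : (∑' _ : ℕ, μ B) = ⊤ := ENNReal.tsum_const_eq_top_of_ne_zero hc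
  have h3 : μ (⋃ k, f k '' B) ≤ 1 := by
    rw [← measure_univ (μ := μ)]
    exact measure_mono (subset_univ _)
  rw [h1, h2] at h3
  exact absurd h3 (by simp)

lemma BadB_null [StandardBorelSpace X] [IsProbabilityMeasure μ] (hEq : Equivalence E)
    (hmE : MeasurableSet {p : X × X | E p.1 p.2})
    (hfull : ∀ T : X ≃ᵐ X, (∀ x, E (T x) x) → MeasurePreserving T μ μ)
    (hS : MeasurePreserving S μ μ) :
    μ {x | bddB E S x ∧ ¬ bddA E S x} = 0 := by
  have hsub : {x | bddB E S x ∧ ¬ bddA E S x} ⊆ ⋃ k : ℤ, zp S k ⁻¹' (Bset E S) := by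
    rintro x ⟨hbB, hbA⟩
    have hrefl : Zm E S 0 x := hEq.refl x
    obtain ⟨m1, m2, m3⟩ := minAll_spec hrefl hbB
    refine mem_iUnion.mpr ⟨minAll E S x, ?_⟩
    refine ⟨fun n hn hZ => ?_, ?_⟩
    · rw [Zm_shift hEq m2] at hZ
      exact m3 _ (by omega) hZ
    · rw [bddA_shift hEq m2]
      exact hbA
  refine measure_mono_null hsub (measure_iUnion_null fun k => ?_)
  rw [(mp_zp S hS k).measure_preimage (measurableSet_Bset hmE).nullMeasurableSet]
  exact Bset_null hEq hmE hfull

lemma Bad_null [StandardBorelSpace X] [IsProbabilityMeasure μ] (hEq : Equivalence E)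
    (hmE : MeasurableSet {p : X × X | E p.1 p.2})
    (hfull : ∀ T : X ≃ᵐ X, (∀ x, E (T x) x) → MeasurePreserving T μ μ)
    (hS : MeasurePreserving S μ μ) :
    μ {x | Bad E S x} = 0 := by
  have hset : {x | Bad E S x} = {x | bddB E S x ∧ ¬ bddA E S x} ∪
      {x | bddB E S.symm x ∧ ¬ bddA E S.symm x} := by
    ext x
    simp only [mem_setOf_eq, mem_union, Bad, bddB_symm, bddA_symm]
    tauto
  rw [hset]
  exact measure_union_null (BadB_null hEq hmE hfull hS) (BadB_null hEq hmE hfull (hS.symm S))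

end badnull


section final
variable {E : X → X → Prop}

lemma Tf_eq_S {S : X ≃ᵐ X} {x : X} (hb : ¬ Bad E S x) (hA : E (S x) x) :
    Tf E S x = S x := by
  have h1 : Zm E S 1 x := by unfold Zm; rwa [zp_one]
  have hp : hasPos E S x := ⟨1, one_pos, h1⟩
  have hmin : posMin E S x = 1 := posMin_eq hp one_pos h1 (fun j hj1 hj2 => by omega)
  rw [Tf_def, nuT_pos hb hp, hmin, zp_one]

lemma E_S_of_Tf_eq (hEq : Equivalence E) {S : X ≃ᵐ X} {x : X} (hTS : Tf E S x = S x) :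
    E (S x) x := by
  have hz : E (Tf E S x) x := Zm_nuT hEq x
  rwa [hTS] at hz

/-- the nearest element of the full group, as a measurable equivalence -/
noncomputable def Teq (hEq : Equivalence E) (hmE : MeasurableSet {p : X × X | E p.1 p.2})
    (S : X ≃ᵐ X) : X ≃ᵐ X where
  toEquiv :=
    { toFun := Tf E S
      invFun := Tf E S.symm
      left_inv := Tf_comp hEq S
      right_inv := fun y => by
        have h := Tf_comp hEq S.symm y
        rwa [MeasurableEquiv.symm_symm] at h }
  measurable_toFun := measurable_Tf hmE
  measurable_invFun := measurable_Tf hmE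

lemma Teq_coe (hEq : Equivalence E) (hmE : MeasurableSet {p : X × X | E p.1 p.2})
    (S : X ≃ᵐ X) : ⇑(Teq hEq hmE S) = Tf E S := rfl

end final
end MPER

open MPER in
/-- `1 - φ_E(S)` equals the uniform distance `δ_u(S, [E])` from `S` to the full
group `[E]`, and the infimum is attained. -/
theorem one_sub_phiE_eq_dist_to_fullGroup
    {X : Type} [MeasurableSpace X] [StandardBorelSpace X]
    (μ : Measure X) [IsProbabilityMeasure μ]
    (E : X → X → Prop) (hE : IsCountableMPER μ E)
    (S : X ≃ᵐ X) (hS : MeasurePreserving S μ μ) :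
    (∃ T : X ≃ᵐ X, MeasurePreserving T μ μ ∧ (∀ᵐ x ∂μ, E (T x) x) ∧
      (μ {x | S x ≠ T x}).toReal = 1 - (μ {x | E (S x) x}).toReal) ∧
    (∀ T : X ≃ᵐ X, MeasurePreserving T μ μ → (∀ᵐ x ∂μ, E (T x) x) →
      1 - (μ {x | E (S x) x}).toReal ≤ (μ {x | S x ≠ T x}).toReal) := by
  obtain ⟨hEq, hmE, hcnt, hfull⟩ := hE
  set A : Set X := {x | E (S x) x} with hA
  have hAm : MeasurableSet A := by
    have h : A = {x | Zm E S 1 x} := by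
      ext x
      show E (S x) x ↔ E (zp S 1 x) x
      rw [zp_one]
    rw [h]
    exact measurableSet_Zm hmE 1
  have hA1 : μ A ≤ 1 := (measure_mono (Set.subset_univ A)).trans (by simp)
  have htoReal : ((1 : ENNReal) - μ A).toReal = 1 - (μ A).toReal := by
    rw [ENNReal.toReal_sub_of_le hA1 ENNReal.one_ne_top, ENNReal.toReal_one]
  constructor
  · -- existence
    refine ⟨Teq hEq hmE S, ?_, ?_, ?_⟩
    · exact hfull _ (fun x => Zm_nuT hEq x)
    · exact Filter.Eventually.of_forall (fun x => Zm_nuT hEq x)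
    · have hBad : μ {x | Bad E S x} = 0 := Bad_null hEq hmE hfull hS
      have hsetEq : {x | S x ≠ Teq hEq hmE S x} \ {x | Bad E S x} =
          Aᶜ \ {x | Bad E S x} := by
        ext x
        simp only [Set.mem_diff, Set.mem_setOf_eq, Set.mem_compl_iff, Teq_coe]
        constructor
        · rintro ⟨hne, hnb⟩
          refine ⟨fun hAx => hne ?_, hnb⟩
          · rw [Set.mem_setOf_eq] at hAx
            rw [Tf_eq_S hnb hAx]
        · rintro ⟨hnA, hnb⟩
          refine ⟨fun heq => hnA ?_, hnb⟩
          exact E_S_of_Tf_eq hEq heq.symm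
      have hμeq : μ {x | S x ≠ Teq hEq hmE S x} = μ Aᶜ := by
        rw [← measure_diff_null (s := {x | S x ≠ Teq hEq hmE S x}) hBad, hsetEq,
          measure_diff_null hBad]
      rw [hμeq, prob_compl_eq_one_sub hAm, htoReal]
  · -- optimality
    intro T hT hae
    have hnull : μ {x | ¬ E (T x) x} = 0 := by
      rw [← MeasureTheory.ae_iff]
      exact hae
    have hsub : {x | S x = T x} ⊆ A ∪ {x | ¬ E (T x) x} := by
      intro x hx
      rw [Set.mem_setOf_eq] at hx
      by_cases hTx : E (T x) x
      · left
        rw [Set.mem_setOf_eq, hx]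
        exact hTx
      · right
        exact hTx
    have hle : μ {x | S x = T x} ≤ μ A := by
      calc μ {x | S x = T x} ≤ μ (A ∪ {x | ¬ E (T x) x}) := measure_mono hsub
      _ ≤ μ A + μ {x | ¬ E (T x) x} := measure_union_le _ _
      _ = μ A := by rw [hnull, add_zero]
    have hcm : MeasurableSet {x | S x = T x} :=
      measurableSet_eq_fun' S.measurable T.measurable
    have hco : {x | S x ≠ T x} = {x | S x = T x}ᶜ := rfl
    have h1 : μ {x | S x ≠ T x} = 1 - μ {x | S x = T x} := by
      rw [hco, prob_compl_eq_one_sub hcm]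
    have hle1 : μ {x | S x = T x} ≤ 1 := (measure_mono (Set.subset_univ _)).trans (by simp)
    have h2 : (μ {x | S x ≠ T x}).toReal = 1 - (μ {x | S x = T x}).toReal := by
      rw [h1, ENNReal.toReal_sub_of_le hle1 ENNReal.one_ne_top, ENNReal.toReal_one]
    have h3 : (μ {x | S x = T x}).toReal ≤ (μ A).toReal :=
      ENNReal.toReal_mono (measure_ne_top μ A) hle
    rw [h2]
    linarith
end

section
/- Let Γ be a countable group with a measure-preserving action on a standard probability space (X,μ) and let F = E^X_Γ be the orbit equivalence relation. Let E be any countable, measure-preserving equivalence relation on (X,μ) and let ε > 0. If φ_E(γ) ≥ 1 − ε for every γ ∈ Γ (identifying γ with the automorphism x ↦ γ·x), then φ_E(S) ≥ 1 − 4ε for every S ∈ [F]. -/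
open MeasureTheory Filter Topology

open scoped ENNReal NNReal

set_option linter.unusedSectionVars false
set_option linter.unusedVariables false

namespace PhiEAux

set_option linter.unusedSectionVars false

variable {X : Type} [MeasurableSpace X] {Γ : Type} [Group Γ] [MulAction Γ X]

/-- The agreement set of two group elements. -/
def CSet (E : X → X → Prop) (i j : Γ) : Set X := {x | E (i • x) (j • x)}

/-- indicator of the agreement set -/
noncomputable def Ind (E : X → X → Prop) (i j : Γ) : X → ℝ :=
  (CSet E i j).indicator fun _ => (1 : ℝ)

lemma ind_nonneg (E : X → X → Prop) (i j : Γ) (x : X) : 0 ≤ Ind E i j x := by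
  unfold Ind
  exact Set.indicator_nonneg (fun _ _ => zero_le_one) x

lemma ind_le_one (E : X → X → Prop) (i j : Γ) (x : X) : Ind E i j x ≤ 1 := by
  unfold Ind
  classical
  rw [Set.indicator_apply]
  split <;> norm_num

lemma ind_of_mem {E : X → X → Prop} {i j : Γ} {x : X} (h : E (i • x) (j • x)) :
    Ind E i j x = 1 := by
  unfold Ind
  exact Set.indicator_of_mem (s := CSet E i j) h _

lemma ind_of_not_mem {E : X → X → Prop} {i j : Γ} {x : X} (h : ¬ E (i • x) (j • x)) :
    Ind E i j x = 0 := by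
  unfold Ind
  exact Set.indicator_of_notMem (s := CSet E i j) h _

/-- `p`-function: the coefficient of the class of `j • x` under a combination `α`. -/
noncomputable def pf (E : X → X → Prop) (α : Γ →₀ ℝ) (j : Γ) (x : X) : ℝ :=
  α.sum fun i a => a * Ind E i j x

lemma pf_apply (E : X → X → Prop) (α : Γ →₀ ℝ) (j : Γ) (x : X) :
    pf E α j x = ∑ i ∈ α.support, α i * Ind E i j x := rfl

/-- bilinear pointwise form -/
noncomputable def Mf (E : X → X → Prop) (β β' : Γ →₀ ℝ) (x : X) : ℝ :=
  β'.sum fun j b => b * pf E β j x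

/-- quadratic pointwise form -/
noncomputable def Pf (E : X → X → Prop) (β : Γ →₀ ℝ) (x : X) : ℝ := Mf E β β x

/-- total mass of a coefficient vector -/
noncomputable def Tot (β : Γ →₀ ℝ) : ℝ := β.sum fun _ a => a

section Pointwise

variable {E : X → X → Prop}

lemma pf_nonneg {α : Γ →₀ ℝ} (hα : ∀ i, 0 ≤ α i) (j : Γ) (x : X) : 0 ≤ pf E α j x := by
  rw [pf_apply]
  exact Finset.sum_nonneg fun i _ => mul_nonneg (hα i) (ind_nonneg E i j x)

lemma pf_le_tot {α : Γ →₀ ℝ} (hα : ∀ i, 0 ≤ α i) (j : Γ) (x : X) : pf E α j x ≤ Tot α := by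
  rw [pf_apply, Tot, Finsupp.sum]
  exact Finset.sum_le_sum fun i _ => by
    calc α i * Ind E i j x ≤ α i * 1 := by
          exact mul_le_mul_of_nonneg_left (ind_le_one E i j x) (hα i)
      _ = α i := mul_one _

/-- Key disjointness: if `γ₀ • x` is not `E`-related to `x` then each translate lies in at
most one of the two classes. -/
lemma pf_add_pf_le_tot (hEq : Equivalence E) {α : Γ →₀ ℝ} (hα : ∀ i, 0 ≤ α i)
    {γ₀ : Γ} {x : X} (hx : ¬ E (γ₀ • x) x) :
    pf E α 1 x + pf E α γ₀ x ≤ Tot α := by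
  rw [pf_apply, pf_apply, ← Finset.sum_add_distrib, Tot, Finsupp.sum]
  refine Finset.sum_le_sum fun i _ => ?_
  have key : Ind E i 1 x + Ind E i γ₀ x ≤ 1 := by
    by_cases h1 : E (i • x) ((1 : Γ) • x)
    · by_cases h2 : E (i • x) (γ₀ • x)
      · exfalso
        apply hx
        have h1' : E (i • x) x := by rwa [one_smul] at h1
        exact hEq.symm (hEq.trans (hEq.symm h1') h2)
      · rw [ind_of_mem h1, ind_of_not_mem h2]; norm_num
    · rw [ind_of_not_mem h1]
      simpa using ind_le_one E i γ₀ x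
  calc α i * Ind E i 1 x + α i * Ind E i γ₀ x
      = α i * (Ind E i 1 x + Ind E i γ₀ x) := by ring
    _ ≤ α i * 1 := mul_le_mul_of_nonneg_left key (hα i)
    _ = α i := mul_one _

/-- The quadratic form is pointwise a sum of squares of class sums, hence nonnegative,
and dominates the square of any single class sum. -/
lemma sq_pf_le_Pf (hEq : Equivalence E) (β : Γ →₀ ℝ) (γ₀ : Γ) (x : X) :
    (pf E β γ₀ x) ^ 2 ≤ Pf E β x ∧ 0 ≤ Pf E β x := by
  classical
  letI sd : Setoid Γ :=
    ⟨fun i j => E (i • x) (j • x),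
      ⟨fun i => hEq.refl _, fun h => hEq.symm h, fun h h' => hEq.trans h h'⟩⟩
  set c : Quotient sd → ℝ :=
    fun q => ∑ j ∈ β.support.filter (fun j => Quotient.mk sd j = q), β j with hc
  have hind : ∀ i j : Γ, Ind E i j x = if Quotient.mk sd i = Quotient.mk sd j then (1:ℝ) else 0 := by
    intro i j
    by_cases hij : E (i • x) (j • x)
    · rw [if_pos (Quotient.sound hij), ind_of_mem hij]
    · rw [if_neg fun hq => hij (Quotient.exact hq), ind_of_not_mem hij]
  have hpf : ∀ j : Γ, pf E β j x = c (Quotient.mk sd j) := by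
    intro j
    have hcq : c (Quotient.mk sd j)
        = ∑ i ∈ β.support.filter (fun i => Quotient.mk sd i = Quotient.mk sd j), β i := rfl
    rw [pf_apply, hcq, Finset.sum_filter]
    refine Finset.sum_congr rfl fun i _ => ?_
    rw [hind i j]
    split <;> simp
  have hPf : Pf E β x = ∑ q ∈ β.support.image (Quotient.mk sd), (c q) ^ 2 := by
    rw [Pf, Mf, Finsupp.sum]
    rw [← Finset.sum_fiberwise_of_maps_to
      (fun i hi => Finset.mem_image_of_mem (Quotient.mk sd) hi)
      (fun j => β j * pf E β j x)]
    refine Finset.sum_congr rfl fun q hq => ?_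
    have : ∀ j ∈ β.support.filter (fun j => Quotient.mk sd j = q),
        β j * pf E β j x = β j * c q := by
      intro j hj
      rw [hpf j, (Finset.mem_filter.1 hj).2]
    rw [Finset.sum_congr rfl this, ← Finset.sum_mul]
    have : ∑ j ∈ β.support.filter (fun j => Quotient.mk sd j = q), β j = c q := rfl
    rw [this, sq]
  constructor
  · rw [hPf, hpf γ₀]
    by_cases hmem : Quotient.mk sd γ₀ ∈ β.support.image (Quotient.mk sd)
    · exact Finset.single_le_sum (fun q _ => sq_nonneg (c q)) hmem
    · have : c (Quotient.mk sd γ₀) = 0 := by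
        rw [hc]
        refine Finset.sum_eq_zero fun j hj => ?_
        exfalso
        apply hmem
        rw [← (Finset.mem_filter.1 hj).2]
        exact Finset.mem_image_of_mem _ (Finset.mem_filter.1 hj).1
      rw [this]
      simpa using Finset.sum_nonneg fun q _ => sq_nonneg (c q)
  · rw [hPf]
    exact Finset.sum_nonneg fun q _ => sq_nonneg (c q)

end Pointwise

section Algebra

variable {E : X → X → Prop}

lemma pf_add (β β' : Γ →₀ ℝ) (j : Γ) (x : X) :
    pf E (β + β') j x = pf E β j x + pf E β' j x := by
  unfold pf
  exact Finsupp.sum_add_index' (fun i => zero_mul _) (fun i b₁ b₂ => add_mul b₁ b₂ _)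

lemma pf_sub (β β' : Γ →₀ ℝ) (j : Γ) (x : X) :
    pf E (β - β') j x = pf E β j x - pf E β' j x := by
  unfold pf
  exact Finsupp.sum_sub_index (fun i b₁ b₂ => sub_mul b₁ b₂ _)

lemma pf_smul (r : ℝ) (β : Γ →₀ ℝ) (j : Γ) (x : X) :
    pf E (r • β) j x = r * pf E β j x := by
  unfold pf
  rw [Finsupp.sum_smul_index' (g := β) (b := r) (h := fun i a => a * Ind E i j x)
    (fun i => zero_mul _), Finsupp.mul_sum]
  refine Finsupp.sum_congr fun i _ => ?_
  rw [smul_eq_mul, mul_assoc]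

lemma Mf_add_right (β β₁ β₂ : Γ →₀ ℝ) (x : X) :
    Mf E β (β₁ + β₂) x = Mf E β β₁ x + Mf E β β₂ x := by
  unfold Mf
  exact Finsupp.sum_add_index' (fun j => zero_mul _) (fun j b₁ b₂ => add_mul b₁ b₂ _)

lemma Mf_sub_right (β β₁ β₂ : Γ →₀ ℝ) (x : X) :
    Mf E β (β₁ - β₂) x = Mf E β β₁ x - Mf E β β₂ x := by
  unfold Mf
  exact Finsupp.sum_sub_index (fun j b₁ b₂ => sub_mul b₁ b₂ _)

lemma Mf_smul_right (r : ℝ) (β β' : Γ →₀ ℝ) (x : X) :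
    Mf E β (r • β') x = r * Mf E β β' x := by
  unfold Mf
  rw [Finsupp.sum_smul_index' (g := β') (b := r) (h := fun j b => b * pf E β j x)
    (fun j => zero_mul _), Finsupp.mul_sum]
  refine Finsupp.sum_congr fun j _ => ?_
  rw [smul_eq_mul, mul_assoc]

lemma Mf_add_left (β₁ β₂ β' : Γ →₀ ℝ) (x : X) :
    Mf E (β₁ + β₂) β' x = Mf E β₁ β' x + Mf E β₂ β' x := by
  unfold Mf
  rw [Finsupp.sum, Finsupp.sum, Finsupp.sum, ← Finset.sum_add_distrib]
  refine Finset.sum_congr rfl fun j _ => ?_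
  rw [pf_add, mul_add]

lemma Mf_sub_left (β₁ β₂ β' : Γ →₀ ℝ) (x : X) :
    Mf E (β₁ - β₂) β' x = Mf E β₁ β' x - Mf E β₂ β' x := by
  unfold Mf
  rw [Finsupp.sum, Finsupp.sum, Finsupp.sum, ← Finset.sum_sub_distrib]
  refine Finset.sum_congr rfl fun j _ => ?_
  rw [pf_sub, mul_sub]

lemma Mf_smul_left (r : ℝ) (β β' : Γ →₀ ℝ) (x : X) :
    Mf E (r • β) β' x = r * Mf E β β' x := by
  unfold Mf
  rw [Finsupp.sum, Finsupp.sum, Finset.mul_sum]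
  refine Finset.sum_congr rfl fun j _ => ?_
  rw [pf_smul]; ring

/-- Pointwise parallelogram-type identity. -/
lemma Pf_parallelogram (α α' : Γ →₀ ℝ) (x : X) :
    Pf E (α' - α) x
      = 2 * Pf E α' x + 2 * Pf E α x - 4 * Pf E ((2⁻¹ : ℝ) • (α + α')) x := by
  unfold Pf
  have h1 : Mf E (α' - α) (α' - α) x
      = Mf E α' α' x - Mf E α α' x - (Mf E α' α x - Mf E α α x) := by
    rw [Mf_sub_right, Mf_sub_left, Mf_sub_left]
  have h2 : Mf E ((2⁻¹ : ℝ) • (α + α')) ((2⁻¹ : ℝ) • (α + α')) x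
      = 4⁻¹ * (Mf E α α x + Mf E α' α x + (Mf E α α' x + Mf E α' α' x)) := by
    rw [Mf_smul_right, Mf_smul_left, Mf_add_right, Mf_add_left, Mf_add_left]
    ring
  rw [h1, h2]
  ring

lemma Tot_add (β β' : Γ →₀ ℝ) : Tot (β + β') = Tot β + Tot β' := by
  unfold Tot
  exact Finsupp.sum_add_index' (fun i => rfl) (fun i b₁ b₂ => rfl)

lemma Tot_smul (r : ℝ) (β : Γ →₀ ℝ) : Tot (r • β) = r * Tot β := by
  unfold Tot
  rw [Finsupp.sum_smul_index' (g := β) (b := r) (h := fun _ a => a) (fun i => rfl),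
    Finsupp.mul_sum]
  rfl

end Algebra

section Shift

variable {E : X → X → Prop}

/-- right-translation of a coefficient vector -/
noncomputable def rsh (γ₀ : Γ) (α : Γ →₀ ℝ) : Γ →₀ ℝ :=
  Finsupp.equivMapDomain (Equiv.mulRight γ₀) α

lemma rsh_apply (γ₀ : Γ) (α : Γ →₀ ℝ) (j : Γ) : rsh γ₀ α j = α (j * γ₀⁻¹) := by
  unfold rsh
  rw [Finsupp.equivMapDomain_apply]
  rfl

lemma Tot_rsh (γ₀ : Γ) (α : Γ →₀ ℝ) : Tot (rsh γ₀ α) = Tot α := by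
  unfold Tot rsh
  rw [Finsupp.sum_equivMapDomain]

/-- The key transport identity: the class coefficient of `x`'s own class, seen from the
translated basepoint `γ₀ • x`, equals the class coefficient of the shifted combination. -/
lemma pf_rsh (α : Γ →₀ ℝ) (γ₀ : Γ) (x : X) :
    pf E α 1 (γ₀ • x) = pf E (rsh γ₀ α) γ₀ x := by
  unfold pf rsh
  rw [Finsupp.sum_equivMapDomain]
  refine Finsupp.sum_congr fun i _ => ?_
  congr 1
  have hmem : E (i • γ₀ • x) ((1 : Γ) • γ₀ • x) ↔ E ((Equiv.mulRight γ₀ i) • x) (γ₀ • x) := by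
    simp [one_smul, mul_smul]
  by_cases hE1 : E (i • γ₀ • x) ((1 : Γ) • γ₀ • x)
  · rw [ind_of_mem hE1, ind_of_mem (hmem.1 hE1)]
  · rw [ind_of_not_mem hE1, ind_of_not_mem (fun hh => hE1 (hmem.2 hh))]

end Shift
section Integrals

variable {E : X → X → Prop} {μ : Measure X} [IsProbabilityMeasure μ]

/-- Gram matrix entry -/
noncomputable def gram (μ : Measure X) (E : X → X → Prop) (i j : Γ) : ℝ :=
  (μ (CSet E i j)).toReal

lemma ind_measurable (mE : ∀ i j : Γ, MeasurableSet (CSet E i j)) (i j : Γ) :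
    Measurable (Ind E i j) :=
  (measurable_const (a := (1:ℝ))).indicator (mE i j)

lemma ind_integrable (mE : ∀ i j : Γ, MeasurableSet (CSet E i j)) (i j : Γ) :
    Integrable (Ind E i j) μ :=
  (integrable_const (1:ℝ)).indicator (mE i j)

lemma integral_ind (mE : ∀ i j : Γ, MeasurableSet (CSet E i j)) (i j : Γ) :
    ∫ x, Ind E i j x ∂μ = gram μ E i j := by
  unfold Ind gram
  rw [integral_indicator_const (1:ℝ) (mE i j), smul_eq_mul, mul_one]
  rfl

lemma pf_measurable (mE : ∀ i j : Γ, MeasurableSet (CSet E i j)) (α : Γ →₀ ℝ) (j : Γ) :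
    Measurable (fun x => pf E α j x) := by
  simp only [pf_apply]
  exact Finset.measurable_sum _ fun i _ => (ind_measurable mE i j).const_mul (α i)

lemma pf_integrable (mE : ∀ i j : Γ, MeasurableSet (CSet E i j)) (α : Γ →₀ ℝ) (j : Γ) :
    Integrable (fun x => pf E α j x) μ := by
  simp only [pf_apply]
  exact integrable_finset_sum _ fun i _ => ((ind_integrable mE i j).const_mul (α i))

lemma integral_pf (mE : ∀ i j : Γ, MeasurableSet (CSet E i j)) (α : Γ →₀ ℝ) (j : Γ) :
    ∫ x, pf E α j x ∂μ = α.sum fun i a => a * gram μ E i j := by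
  simp only [pf_apply]
  rw [integral_finset_sum _ fun i _ => ((ind_integrable mE i j).const_mul (α i))]
  refine Finset.sum_congr rfl fun i _ => ?_
  rw [MeasureTheory.integral_const_mul, integral_ind mE]

lemma Mf_measurable (mE : ∀ i j : Γ, MeasurableSet (CSet E i j)) (β β' : Γ →₀ ℝ) :
    Measurable (fun x => Mf E β β' x) := by
  unfold Mf
  simp only [Finsupp.sum]
  exact Finset.measurable_sum _ fun j _ => (pf_measurable mE β j).const_mul (β' j)

lemma Mf_integrable (mE : ∀ i j : Γ, MeasurableSet (CSet E i j)) (β β' : Γ →₀ ℝ) :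
    Integrable (fun x => Mf E β β' x) μ := by
  unfold Mf
  simp only [Finsupp.sum]
  exact integrable_finset_sum _ fun j _ => ((pf_integrable mE β j).const_mul (β' j))

lemma Pf_integrable (mE : ∀ i j : Γ, MeasurableSet (CSet E i j)) (β : Γ →₀ ℝ) :
    Integrable (fun x => Pf E β x) μ := Mf_integrable mE β β

lemma integral_Mf (mE : ∀ i j : Γ, MeasurableSet (CSet E i j)) (β β' : Γ →₀ ℝ) :
    ∫ x, Mf E β β' x ∂μ = β'.sum fun j b => b * (β.sum fun i a => a * gram μ E i j) := by
  unfold Mf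
  simp only [Finsupp.sum]
  rw [integral_finset_sum _ fun j _ => ((pf_integrable mE β j).const_mul (β' j))]
  refine Finset.sum_congr rfl fun j _ => ?_
  rw [MeasureTheory.integral_const_mul, integral_pf mE]
  rfl

lemma integral_Pf_nonneg (hEq : Equivalence E) (mE : ∀ i j : Γ, MeasurableSet (CSet E i j))
    (β : Γ →₀ ℝ) : 0 ≤ ∫ x, Pf E β x ∂μ :=
  integral_nonneg fun x => (sq_pf_le_Pf hEq β 1 x).2

/-- Gram matrix is invariant under simultaneous right translation. -/
lemma gram_shift (mE : ∀ i j : Γ, MeasurableSet (CSet E i j))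
    (hmp : ∀ γ : Γ, MeasurePreserving (fun x : X => γ • x) μ μ) (i j γ₀ : Γ) :
    gram μ E (i * γ₀) (j * γ₀) = gram μ E i j := by
  unfold gram
  congr 1
  have hset : CSet E (i * γ₀) (j * γ₀) = (fun x : X => γ₀ • x) ⁻¹' (CSet E i j) := by
    ext x
    simp [CSet, mul_smul]
  rw [hset]
  exact (hmp γ₀).measure_preimage (mE i j).nullMeasurableSet

/-- The integral of the quadratic form is invariant under right translation. -/
lemma integral_Pf_rsh (mE : ∀ i j : Γ, MeasurableSet (CSet E i j))
    (hmp : ∀ γ : Γ, MeasurePreserving (fun x : X => γ • x) μ μ) (α : Γ →₀ ℝ) (γ₀ : Γ) :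
    ∫ x, Pf E (rsh γ₀ α) x ∂μ = ∫ x, Pf E α x ∂μ := by
  unfold Pf
  rw [integral_Mf mE, integral_Mf mE]
  unfold rsh
  rw [Finsupp.sum_equivMapDomain]
  refine Finsupp.sum_congr fun j _ => ?_
  congr 1
  rw [Finsupp.sum_equivMapDomain]
  refine Finsupp.sum_congr fun i _ => ?_
  congr 1
  exact gram_shift mE hmp i j γ₀

/-- Markov inequality, in the form we use. -/
lemma markov (f : X → ℝ) (hfint : Integrable f μ) (hf0 : ∀ x, 0 ≤ f x) {c : ℝ} (hc : 0 < c)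
    (hms : MeasurableSet {x | c ≤ f x}) :
    c * (μ {x | c ≤ f x}).toReal ≤ ∫ x, f x ∂μ := by
  calc c * (μ {x | c ≤ f x}).toReal ≤ ∫ x in {x | c ≤ f x}, f x ∂μ :=
        setIntegral_ge_of_const_le_real hms (measure_ne_top μ _) (fun x hx => hx)
          (hfint.integrableOn)
    _ ≤ ∫ x, f x ∂μ := setIntegral_le_integral hfint (Filter.Eventually.of_forall hf0)

end Integrals
set_option maxHeartbeats 2000000 in
/-- Main auxiliary theorem. -/
theorem key
    {X : Type} [MeasurableSpace X] [StandardBorelSpace X]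
    (μ : Measure X) [IsProbabilityMeasure μ]
    {Γ : Type} [Group Γ] [Countable Γ] [MulAction Γ X]
    (hmp : ∀ γ : Γ, MeasurePreserving (fun x : X => γ • x) μ μ)
    (E : X → X → Prop) (hEq : Equivalence E)
    (hEmeas : MeasurableSet {p : X × X | E p.1 p.2})
    (ε : ℝ) (hε : 0 < ε)
    (h : ∀ γ : Γ, 1 - ε ≤ (μ {x | E (γ • x) x}).toReal)
    (S : X ≃ᵐ X) (hS : MeasurePreserving S μ μ)
    (horb : ∀ᵐ x ∂μ, ∃ γ : Γ, γ • x = S x) :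
    1 - 4 * ε ≤ (μ {x | E (S x) x}).toReal := by
  classical
  letI := upgradeStandardBorel X
  -- measurability of agreement sets
  have mE : ∀ i j : Γ, MeasurableSet (CSet E i j) := fun i j =>
    ((hmp i).measurable.prodMk (hmp j).measurable) hEmeas
  set GOOD : Set X := {x | E (S x) x} with hGOOD
  have mGOOD : MeasurableSet GOOD := (S.measurable.prodMk measurable_id) hEmeas
  -- reduce to the complement bound
  suffices hBad : ∀ ζ : ℝ, 0 < ζ → (μ GOODᶜ).toReal ≤ 4 * ε + ζ by
    have hBad' : (μ GOODᶜ).toReal ≤ 4 * ε := le_of_forall_pos_le_add hBad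
    have hsum : (μ GOOD).toReal + (μ GOODᶜ).toReal = 1 := by
      rw [← ENNReal.toReal_add (measure_ne_top μ _) (measure_ne_top μ _),
        measure_add_measure_compl mGOOD, measure_univ, ENNReal.toReal_one]
    linarith
  -- the minimization problem
  set 𝒮 : Set ℝ :=
    {r : ℝ | ∃ α : Γ →₀ ℝ, (∀ i, 0 ≤ α i) ∧ Tot α = 1 ∧ r = ∫ x, Pf E α x ∂μ} with h𝒮
  have hne : 𝒮.Nonempty := by
    refine ⟨∫ x, Pf E (Finsupp.single (1 : Γ) (1:ℝ)) x ∂μ,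
      Finsupp.single (1 : Γ) (1:ℝ), fun i => ?_, ?_, rfl⟩
    · rw [Finsupp.single_apply]; split <;> norm_num
    · unfold Tot
      rw [Finsupp.sum_single_index rfl]
  have hbdd : BddBelow 𝒮 := by
    refine ⟨0, fun r hr => ?_⟩
    obtain ⟨α, -, -, rfl⟩ := hr
    exact integral_Pf_nonneg hEq mE α
  set m2 : ℝ := sInf 𝒮 with hm2
  -- main estimate
  intro ζ hζ
  set t : ℝ := min (1/4 : ℝ) (ζ / (16*ε + 2*ζ)) with ht
  have ht0 : 0 < t := lt_min (by norm_num) (by positivity)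
  have ht4 : t ≤ 1/4 := min_le_left _ _
  have htkey : t * (2*ε + ζ/4) ≤ ζ/8 := by
    have h1 : t ≤ ζ / (16*ε + 2*ζ) := min_le_right _ _
    have h2 : (0:ℝ) < 2*ε + ζ/4 := by positivity
    have h3 : (16*ε + 2*ζ) = 8 * (2*ε + ζ/4) := by ring
    calc t * (2*ε + ζ/4) ≤ (ζ / (16*ε + 2*ζ)) * (2*ε + ζ/4) :=
          mul_le_mul_of_nonneg_right h1 h2.le
      _ = ζ/8 := by
          rw [h3]
          field_simp
  -- the pieces of S
  have : Nonempty Γ := ⟨1⟩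
  obtain ⟨e, he⟩ := exists_surjective_nat Γ
  have eqS : ∀ γ : Γ, MeasurableSet {x : X | γ • x = S x} := fun γ =>
    StronglyMeasurable.measurableSet_eq_fun
      ((hmp γ).measurable.stronglyMeasurable) (S.measurable.stronglyMeasurable)
  set A : ℕ → Set X :=
    fun n => {x | e n • x = S x} ∩ ⋂ m : Fin n, {x | e (m : ℕ) • x = S x}ᶜ with hA
  have mA : ∀ n, MeasurableSet (A n) := fun n =>
    (eqS (e n)).inter (MeasurableSet.iInter fun m => (eqS (e m)).compl)
  set U : ℕ → Set X := fun N => ⋃ n ∈ Finset.range N, A n with hU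
  have mU : ∀ N, MeasurableSet (U N) := fun N =>
    (Finset.range N).measurableSet_biUnion fun n _ => mA n
  have hUmono : Monotone U := by
    intro N M hNM x hx
    simp only [hU, Set.mem_iUnion, Finset.mem_range] at hx ⊢
    obtain ⟨n, hn, hxn⟩ := hx
    exact ⟨n, lt_of_lt_of_le hn hNM, hxn⟩
  have hUT : (⋃ N, U N) = ⋃ n, A n := by
    ext x
    simp only [hU, Set.mem_iUnion, Finset.mem_range]
    constructor
    · rintro ⟨N, n, -, hx⟩; exact ⟨n, hx⟩
    · rintro ⟨n, hx⟩; exact ⟨n+1, n, Nat.lt_succ_self n, hx⟩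
  have hT1 : μ (⋃ n, A n) = 1 := by
    have hcov : ∀ᵐ x ∂μ, x ∈ ⋃ n, A n := by
      refine horb.mono fun x hx => ?_
      obtain ⟨γ, hγ⟩ := hx
      obtain ⟨n, rfl⟩ := he γ
      have hex : ∃ n, e n • x = S x := ⟨n, hγ⟩
      refine Set.mem_iUnion.2 ⟨Nat.find hex, Set.mem_inter (Nat.find_spec hex) ?_⟩
      refine Set.mem_iInter.2 fun m => ?_
      exact Nat.find_min hex m.2
    have h0 : μ (⋃ n, A n)ᶜ = 0 := by
      have hrfl : {x | ¬ x ∈ ⋃ n, A n} = (⋃ n, A n)ᶜ := rfl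
      rw [← hrfl]
      exact MeasureTheory.ae_iff.1 hcov
    exact (prob_compl_eq_zero_iff (MeasurableSet.iUnion mA)).1 h0
  have htend : Filter.Tendsto (fun N => μ (U N)) Filter.atTop (nhds 1) := by
    have := tendsto_measure_iUnion_atTop (μ := μ) hUmono
    rwa [hUT, hT1] at this
  have hlt : (1 : ℝ≥0∞) - ENNReal.ofReal (ζ/4) < 1 :=
    ENNReal.sub_lt_self ENNReal.one_ne_top one_ne_zero
      (ENNReal.ofReal_pos.2 (by positivity)).ne'
  obtain ⟨N0, hN0⟩ := (htend.eventually_const_lt hlt).exists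
  have hUc : (μ (U N0)ᶜ).toReal ≤ ζ/4 := by
    have h1 : μ (U N0)ᶜ = 1 - μ (U N0) := prob_compl_eq_one_sub (mU N0)
    have h2 : μ (U N0)ᶜ ≤ ENNReal.ofReal (ζ/4) := by
      rw [h1]
      calc (1:ℝ≥0∞) - μ (U N0) ≤ 1 - (1 - ENNReal.ofReal (ζ/4)) :=
            tsub_le_tsub_left hN0.le 1
        _ ≤ ENNReal.ofReal (ζ/4) := by
            rw [tsub_le_iff_right, add_comm]
            exact le_tsub_add
    calc (μ (U N0)ᶜ).toReal ≤ (ENNReal.ofReal (ζ/4)).toReal :=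
          ENNReal.toReal_mono ENNReal.ofReal_ne_top h2
      _ = ζ/4 := ENNReal.toReal_ofReal (by positivity)
  -- near-minimizer
  set θ : ℝ := t^2 * ζ / (16 * (N0+1)) with hθdef
  have hθ : 0 < θ := by positivity
  obtain ⟨r, hr𝒮, hrlt⟩ := Real.lt_sInf_add_pos hne hθ
  obtain ⟨α, hα0, hαTot, rfl⟩ := hr𝒮
  rw [← hm2] at hrlt
  -- Gram lower bound from the hypothesis h
  have hgram : ∀ i : Γ, 1 - ε ≤ gram μ E i 1 := by
    intro i
    have hset : CSet E i 1 = {x | E (i • x) x} := by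
      ext x; simp [CSet, one_smul]
    unfold gram
    rw [hset]
    exact h i
  have hpfint : 1 - ε ≤ ∫ x, pf E α 1 x ∂μ := by
    rw [integral_pf mE α 1]
    have h1 : (α.sum fun i a => a * (1 - ε)) ≤ α.sum fun i a => a * gram μ E i 1 := by
      refine Finset.sum_le_sum fun i _ => ?_
      exact mul_le_mul_of_nonneg_left (hgram i) (hα0 i)
    have h2 : (α.sum fun i a => a * (1 - ε)) = 1 - ε := by
      unfold Finsupp.sum
      rw [← Finset.sum_mul]
      have : ∑ i ∈ α.support, α i = 1 := hαTot
      rw [this, one_mul]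
    linarith
  -- the defect function
  set f0 : X → ℝ := fun x => 1 - pf E α 1 x with hf0
  have hf0nonneg : ∀ x, 0 ≤ f0 x := by
    intro x
    have := pf_le_tot (E := E) hα0 1 x
    rw [hαTot] at this
    simp only [hf0]
    linarith
  have hf0int : Integrable f0 μ := (integrable_const 1).sub (pf_integrable mE α 1)
  have hf0integral : ∫ x, f0 x ∂μ ≤ ε := by
    simp only [hf0]
    rw [integral_sub (integrable_const 1) (pf_integrable mE α 1), integral_const]
    simp only [measure_univ, probReal_univ, ENNReal.toReal_one, smul_eq_mul, one_mul]
    linarith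
  -- Markov sets
  set Bset : Set X := {x | 1/2 ≤ f0 x} with hBset
  have mBset : MeasurableSet Bset :=
    measurableSet_le measurable_const (measurable_const.sub (pf_measurable mE α 1))
  have hBbound : (μ Bset).toReal ≤ 2 * ε := by
    have := markov (μ := μ) f0 hf0int hf0nonneg (c := 1/2) (by norm_num) mBset
    have h2 := hf0integral
    rw [← hBset] at this
    linarith
  set B2 : Set X := {x | 1/2 - t ≤ f0 x} with hB2
  have mB2 : MeasurableSet B2 :=
    measurableSet_le measurable_const (measurable_const.sub (pf_measurable mE α 1))
  have hB2bound : (μ B2).toReal ≤ 2*ε + ζ/4 := by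
    have hmk := markov (μ := μ) f0 hf0int hf0nonneg (c := 1/2 - t) (by linarith) mB2
    rw [← hB2] at hmk
    have hc : (0:ℝ) < 1/2 - t := by linarith
    have hfin : ε ≤ (1/2 - t) * (2*ε + ζ/4) := by nlinarith
    nlinarith [hmk, hf0integral, (μ B2).toReal, ENNReal.toReal_nonneg (a := μ B2)]
  -- the error sets
  set Err : ℕ → Set X :=
    fun n => {x | t^2 ≤ (pf E (rsh (e n) α) (e n) x - pf E α (e n) x)^2} with hErr
  have mErr : ∀ n, MeasurableSet (Err n) := fun n =>
    measurableSet_le measurable_const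
      (((pf_measurable mE _ _).sub (pf_measurable mE _ _)).pow_const 2)
  have hErrBound : ∀ n, (μ (Err n)).toReal ≤ ζ / (4 * ((N0:ℝ) + 1)) := by
    intro n
    set β : Γ →₀ ℝ := rsh (e n) α - α with hβ
    have hdβ : ∀ x, pf E (rsh (e n) α) (e n) x - pf E α (e n) x = pf E β (e n) x := by
      intro x; rw [hβ, pf_sub]
    have hsq : ∀ x, (pf E (rsh (e n) α) (e n) x - pf E α (e n) x)^2 ≤ Pf E β x := by
      intro x
      rw [hdβ x]
      exact (sq_pf_le_Pf hEq β (e n) x).1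
    -- the squared difference is integrable
    have hmeassq : Measurable fun x => (pf E (rsh (e n) α) (e n) x - pf E α (e n) x)^2 :=
      ((pf_measurable mE _ _).sub (pf_measurable mE _ _)).pow_const 2
    have hintsq : Integrable (fun x => (pf E (rsh (e n) α) (e n) x - pf E α (e n) x)^2) μ := by
      refine Integrable.mono' (Pf_integrable mE β) hmeassq.aestronglyMeasurable ?_
      refine Filter.Eventually.of_forall fun x => ?_
      rw [Real.norm_eq_abs, abs_of_nonneg (sq_nonneg _)]
      exact hsq x
    -- the integral bound via the parallelogram identity
    have hmid : ((2⁻¹ : ℝ) • (α + rsh (e n) α)) ∈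
        {α' : Γ →₀ ℝ | (∀ i, 0 ≤ α' i) ∧ Tot α' = 1} := by
      constructor
      · intro i
        rw [Finsupp.smul_apply, Finsupp.add_apply, smul_eq_mul]
        have h1 := hα0 i
        have h2 : 0 ≤ rsh (e n) α i := by rw [rsh_apply]; exact hα0 _
        positivity
      · rw [Tot_smul, Tot_add, Tot_rsh, hαTot]
        norm_num
    have hmidmem : (∫ x, Pf E ((2⁻¹ : ℝ) • (α + rsh (e n) α)) x ∂μ) ∈ 𝒮 :=
      ⟨_, hmid.1, hmid.2, rfl⟩
    have hmidge : m2 ≤ ∫ x, Pf E ((2⁻¹ : ℝ) • (α + rsh (e n) α)) x ∂μ :=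
      csInf_le hbdd hmidmem
    have hshint : (∫ x, Pf E (rsh (e n) α) x ∂μ) = ∫ x, Pf E α x ∂μ :=
      integral_Pf_rsh mE hmp α (e n)
    have hPfβ : ∫ x, Pf E β x ∂μ ≤ 4 * θ := by
      have hident : ∀ x, Pf E β x
          = 2 * Pf E (rsh (e n) α) x + 2 * Pf E α x
            - 4 * Pf E ((2⁻¹ : ℝ) • (α + rsh (e n) α)) x := fun x =>
        Pf_parallelogram α (rsh (e n) α) x
      have hint1 := Pf_integrable (μ := μ) mE (rsh (e n) α)
      have hint2 := Pf_integrable (μ := μ) mE α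
      have hint3 := Pf_integrable (μ := μ) mE ((2⁻¹ : ℝ) • (α + rsh (e n) α))
      calc ∫ x, Pf E β x ∂μ
          = ∫ x, (2 * Pf E (rsh (e n) α) x + 2 * Pf E α x
              - 4 * Pf E ((2⁻¹ : ℝ) • (α + rsh (e n) α)) x) ∂μ := by
            refine integral_congr_ae (Filter.Eventually.of_forall fun x => hident x)
        _ = 2 * (∫ x, Pf E (rsh (e n) α) x ∂μ) + 2 * (∫ x, Pf E α x ∂μ)
              - 4 * (∫ x, Pf E ((2⁻¹ : ℝ) • (α + rsh (e n) α)) x ∂μ) := by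
            have i1 : Integrable (fun x => 2 * Pf E (rsh (e n) α) x) μ := hint1.const_mul 2
            have i2 : Integrable (fun x => 2 * Pf E α x) μ := hint2.const_mul 2
            have i3 : Integrable
                (fun x => 4 * Pf E ((2⁻¹ : ℝ) • (α + rsh (e n) α)) x) μ := hint3.const_mul 4
            have i12 : Integrable
                (fun x => 2 * Pf E (rsh (e n) α) x + 2 * Pf E α x) μ := i1.add i2
            rw [integral_sub i12 i3, integral_add i1 i2,
              MeasureTheory.integral_const_mul, MeasureTheory.integral_const_mul,
              MeasureTheory.integral_const_mul]
        _ ≤ 4 * θ := by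
            rw [hshint]
            linarith
    have hintle : ∫ x, (pf E (rsh (e n) α) (e n) x - pf E α (e n) x)^2 ∂μ
        ≤ 4 * θ := by
      calc ∫ x, (pf E (rsh (e n) α) (e n) x - pf E α (e n) x)^2 ∂μ
          ≤ ∫ x, Pf E β x ∂μ :=
            integral_mono hintsq (Pf_integrable mE β) hsq
        _ ≤ 4 * θ := hPfβ
    have hmk := markov (μ := μ) _ hintsq (fun x => sq_nonneg _) (c := t^2)
      (by positivity) (mErr n)
    have hfinal : t^2 * (μ (Err n)).toReal ≤ 4 * θ := le_trans hmk hintle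
    have h4θ : 4 * θ = t^2 * (ζ / (4*((N0:ℝ)+1))) := by
      rw [hθdef]
      field_simp
      ring
    rw [h4θ] at hfinal
    exact le_of_mul_le_mul_left hfinal (by positivity)
  -- the set inclusion
  set ErrU : Set X := ⋃ n ∈ Finset.range N0, Err n with hErrU
  have hincl : GOODᶜ ⊆ ((U N0)ᶜ ∪ Bset ∪ S ⁻¹' B2) ∪ ErrU := by
    intro x hx
    have hxE : ¬ E (S x) x := hx
    by_cases hxU : x ∈ U N0
    swap
    · exact Or.inl (Or.inl (Or.inl hxU))
    · simp only [hU, Set.mem_iUnion, Finset.mem_range] at hxU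
      obtain ⟨n, hnN, hxA⟩ := hxU
      have hSx : e n • x = S x := hxA.1
      have hxE' : ¬ E (e n • x) x := by rwa [hSx]
      by_cases hc1 : pf E α 1 x ≤ 1/2
      · refine Or.inl (Or.inl (Or.inr ?_))
        show 1/2 ≤ f0 x
        simp only [hf0]
        linarith
      · push_neg at hc1
        have hsum2 : pf E α 1 x + pf E α (e n) x ≤ 1 := by
          have := pf_add_pf_le_tot hEq hα0 hxE'
          rwa [hαTot] at this
        have hc2 : pf E α (e n) x < 1/2 := by linarith
        by_cases hc3 : t^2 ≤ (pf E (rsh (e n) α) (e n) x - pf E α (e n) x)^2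
        · refine Or.inr ?_
          simp only [hErrU, Set.mem_iUnion, Finset.mem_range]
          exact ⟨n, hnN, hc3⟩
        · push_neg at hc3
          have habs : pf E (rsh (e n) α) (e n) x - pf E α (e n) x < t := by
            nlinarith [sq_nonneg (pf E (rsh (e n) α) (e n) x - pf E α (e n) x - t),
              sq_nonneg (pf E (rsh (e n) α) (e n) x - pf E α (e n) x + t)]
          have hSxB : pf E α 1 (S x) < 1/2 + t := by
            rw [← hSx, pf_rsh]
            linarith
          refine Or.inl (Or.inr ?_)
          show S x ∈ B2
          show 1/2 - t ≤ f0 (S x)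
          simp only [hf0]
          linarith
  -- measure chain
  have hchain : μ GOODᶜ ≤ μ (U N0)ᶜ + μ Bset + μ (S ⁻¹' B2) + μ ErrU := by
    calc μ GOODᶜ ≤ μ (((U N0)ᶜ ∪ Bset ∪ S ⁻¹' B2) ∪ ErrU) := measure_mono hincl
      _ ≤ μ ((U N0)ᶜ ∪ Bset ∪ S ⁻¹' B2) + μ ErrU := measure_union_le _ _
      _ ≤ (μ ((U N0)ᶜ ∪ Bset) + μ (S ⁻¹' B2)) + μ ErrU :=
          add_le_add_left (measure_union_le _ _) _
      _ ≤ ((μ (U N0)ᶜ + μ Bset) + μ (S ⁻¹' B2)) + μ ErrU :=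
          add_le_add_left (add_le_add_left (measure_union_le _ _) _) _
  have hpre : μ (S ⁻¹' B2) = μ B2 := hS.measure_preimage mB2.nullMeasurableSet
  have hErrUBound : (μ ErrU).toReal ≤ ζ/4 := by
    have h1 : μ ErrU ≤ ∑ n ∈ Finset.range N0, μ (Err n) :=
      measure_biUnion_finset_le _ _
    have h2 : (μ ErrU).toReal ≤ ∑ n ∈ Finset.range N0, (μ (Err n)).toReal := by
      calc (μ ErrU).toReal ≤ (∑ n ∈ Finset.range N0, μ (Err n)).toReal :=
            ENNReal.toReal_mono (by
              refine (ENNReal.sum_lt_top.2 fun n _ => ?_).ne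
              exact measure_lt_top μ _) h1
        _ = ∑ n ∈ Finset.range N0, (μ (Err n)).toReal :=
            ENNReal.toReal_sum fun n _ => measure_ne_top μ _
    have h3 : ∑ n ∈ Finset.range N0, (μ (Err n)).toReal
        ≤ ∑ n ∈ Finset.range N0, ζ / (4 * ((N0:ℝ) + 1)) :=
      Finset.sum_le_sum fun n _ => hErrBound n
    have h4 : ∑ n ∈ Finset.range N0, ζ / (4 * ((N0:ℝ) + 1))
        = N0 * (ζ / (4 * ((N0:ℝ) + 1))) := by
      rw [Finset.sum_const, Finset.card_range, nsmul_eq_mul]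
    have h5 : (N0:ℝ) * (ζ / (4 * ((N0:ℝ) + 1))) ≤ ζ/4 := by
      rw [mul_div_assoc', div_le_div_iff₀ (by positivity) (by norm_num)]
      nlinarith [Nat.cast_nonneg (α := ℝ) N0, hζ.le]
    linarith
  have htoReal : (μ GOODᶜ).toReal
      ≤ (μ (U N0)ᶜ).toReal + (μ Bset).toReal + (μ B2).toReal + (μ ErrU).toReal := by
    have hne1 : μ (U N0)ᶜ + μ Bset + μ (S ⁻¹' B2) + μ ErrU ≠ ⊤ := by
      refine ENNReal.add_ne_top.2 ⟨ENNReal.add_ne_top.2 ⟨ENNReal.add_ne_top.2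
        ⟨measure_ne_top μ _, measure_ne_top μ _⟩, measure_ne_top μ _⟩, measure_ne_top μ _⟩
    calc (μ GOODᶜ).toReal
        ≤ (μ (U N0)ᶜ + μ Bset + μ (S ⁻¹' B2) + μ ErrU).toReal :=
          ENNReal.toReal_mono hne1 hchain
      _ = (μ (U N0)ᶜ).toReal + (μ Bset).toReal + (μ (S ⁻¹' B2)).toReal
            + (μ ErrU).toReal := by
          rw [ENNReal.toReal_add (ENNReal.add_ne_top.2 ⟨ENNReal.add_ne_top.2
              ⟨measure_ne_top μ _, measure_ne_top μ _⟩, measure_ne_top μ _⟩)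
              (measure_ne_top μ _),
            ENNReal.toReal_add (ENNReal.add_ne_top.2
              ⟨measure_ne_top μ _, measure_ne_top μ _⟩) (measure_ne_top μ _),
            ENNReal.toReal_add (measure_ne_top μ _) (measure_ne_top μ _)]
      _ = (μ (U N0)ᶜ).toReal + (μ Bset).toReal + (μ B2).toReal + (μ ErrU).toReal := by
          rw [hpre]
  linarith [hUc, hBbound, hB2bound, hErrUBound, htoReal]
end PhiEAux


/-- Theorem 2.7: if `φ_E(γ) ≥ 1 - ε` for all `γ ∈ Γ`, then `φ_E(S) ≥ 1 - 4ε`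
for every `S` in the full group `[F]` of the orbit equivalence relation `F`. -/
theorem phiE_ge_of_phiE_ge_on_group
    {X : Type} [MeasurableSpace X] [StandardBorelSpace X]
    (μ : Measure X) [IsProbabilityMeasure μ]
    {Γ : Type} [Group Γ] [Countable Γ] [MulAction Γ X]
    (hmeas : ∀ γ : Γ, Measurable fun x : X => γ • x)
    (hmp : ∀ γ : Γ, MeasurePreserving (fun x : X => γ • x) μ μ)
    (E : X → X → Prop) (hE : IsCountableMPER μ E)
    (ε : ℝ) (hε : 0 < ε)
    (h : ∀ γ : Γ, 1 - ε ≤ (μ {x | E (γ • x) x}).toReal) :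
    ∀ S : X ≃ᵐ X, MeasurePreserving S μ μ → (∀ᵐ x ∂μ, ∃ γ : Γ, γ • x = S x) →
      1 - 4 * ε ≤ (μ {x | E (S x) x}).toReal := fun S hSmp horb =>
  PhiEAux.key μ hmp E hE.1 hE.2.1 ε hε h S hSmp horb
end

section
/- Let Γ be a countable group with a measure-preserving action on a standard probability space (X,μ), let F = E^X_Γ be the orbit equivalence relation, and let E ⊆ F be a countable, measure-preserving subequivalence relation. Suppose φ_E(γ) → 0 along the cofinite filter on Γ. Then for any Borel maps S, T : X → X with S(x) F x and T(x) F x for μ-a.e. x, the quantity μ({x : S(x) E T(γ·x)}) → 0 along the cofinite filter on Γ. -/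
open MeasureTheory Filter Topology

lemma measurableSet_eq_fun_std {X : Type} [MeasurableSpace X] [StandardBorelSpace X]
    {f g : X → X} (hf : Measurable f) (hg : Measurable g) :
    MeasurableSet {x | f x = g x} := by
  letI := upgradeStandardBorel X
  exact MeasureTheory.StronglyMeasurable.measurableSet_eq_fun
    hf.stronglyMeasurable hg.stronglyMeasurable

lemma exists_finset_small {X : Type} [MeasurableSpace X] [StandardBorelSpace X]
    (μ : Measure X) [IsProbabilityMeasure μ]
    {Γ : Type} [Group Γ] [Countable Γ] [MulAction Γ X]
    (hmeas : ∀ γ : Γ, Measurable fun x : X => γ • x)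
    (f : X → X) (hf : Measurable f)
    (hfF : ∀ᵐ x ∂μ, ∃ γ : Γ, γ • x = f x) {ε : ENNReal} (hε : 0 < ε) :
    ∃ A : Finset Γ, μ {x | ∀ a ∈ A, a • x ≠ f x} < ε := by
  obtain ⟨e, he⟩ := exists_surjective_nat Γ
  set s : ℕ → Set X := fun n => {x | e n • x = f x} with hs
  have hsm : ∀ n, MeasurableSet (s n) := fun n => measurableSet_eq_fun_std (hmeas (e n)) hf
  have hnull : μ ((⋃ n, Set.accumulate s n)ᶜ) = 0 := by
    rw [Set.iUnion_accumulate]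
    refine measure_mono_null ?_ (by exact hfF)
    intro x hx
    simp only [Set.mem_compl_iff, Set.mem_iUnion] at hx
    simp only [Set.mem_setOf_eq]
    rintro ⟨γ, hγ⟩
    obtain ⟨n, rfl⟩ := he γ
    exact hx ⟨n, hγ⟩
  have htend : Tendsto (fun n => μ ((Set.accumulate s n)ᶜ)) atTop (nhds 0) := by
    have h1 : Tendsto (fun n => μ ((Set.accumulate s n)ᶜ)) atTop
        (nhds (μ (⋂ n, (Set.accumulate s n)ᶜ))) := by
      refine tendsto_measure_iInter_atTop
        (fun n => ((MeasurableSet.iUnion fun i => MeasurableSet.iUnion fun _ =>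
          hsm i).compl).nullMeasurableSet) ?_ ⟨0, measure_ne_top μ _⟩
      intro m n hmn
      exact Set.compl_subset_compl.2 (Set.monotone_accumulate hmn)
    rwa [← Set.compl_iUnion, hnull] at h1
  obtain ⟨n, hn⟩ := (htend.eventually_lt_const hε).exists
  classical
  refine ⟨(Finset.range (n + 1)).image e, lt_of_le_of_lt (measure_mono ?_) hn⟩
  intro x hx
  simp only [Set.mem_setOf_eq, Finset.mem_image, Finset.mem_range] at hx
  simp only [Set.mem_compl_iff, Set.mem_accumulate]
  rintro ⟨k, hk, hkx⟩
  exact hx (e k) ⟨k, by omega, rfl⟩ hkx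

/-- Lemma 3.2 (generalized): if `φ_E(γ) → 0` along the cofinite filter of `Γ`,
then for Borel maps `S, T : X → X` with `S(x) F x` and `T(x) F x` a.e.,
`μ({x : S(x) E T(γ·x)}) → 0` along the cofinite filter. -/
theorem tendsto_measure_twisted_of_tendsto_phiE
    {X : Type} [MeasurableSpace X] [StandardBorelSpace X]
    (μ : Measure X) [IsProbabilityMeasure μ]
    {Γ : Type} [Group Γ] [Countable Γ] [MulAction Γ X]
    (hmeas : ∀ γ : Γ, Measurable fun x : X => γ • x)
    (hmp : ∀ γ : Γ, MeasurePreserving (fun x : X => γ • x) μ μ)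
    (E : X → X → Prop) (hE : IsCountableMPER μ E)
    (hEF : ∀ x y, E x y → ∃ γ : Γ, γ • x = y)
    (h0 : Tendsto (fun γ : Γ => (μ {x | E (γ • x) x}).toReal) cofinite (nhds 0))
    (S T : X → X) (hS : Measurable S) (hT : Measurable T)
    (hSF : ∀ᵐ x ∂μ, ∃ γ : Γ, γ • x = S x)
    (hTF : ∀ᵐ x ∂μ, ∃ γ : Γ, γ • x = T x) :
    Tendsto (fun γ : Γ => (μ {x | E (S x) (T (γ • x))}).toReal)
      cofinite (nhds 0) := by
  obtain ⟨hequiv, hEmeas, -, -⟩ := hE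
  have hEmb : ∀ γ : Γ, MeasurableEmbedding (fun x : X => γ • x) := fun γ =>
    (MeasurableEquiv.mk (MulAction.toPerm γ) (hmeas γ) (hmeas γ⁻¹)).measurableEmbedding
  -- the key measure computation
  have key : ∀ a b γ : Γ, μ {x | E (a • x) (b • γ • x)} = μ {x | E ((b * γ * a⁻¹) • x) x} := by
    intro a b γ
    have hmsi : MeasurableSet {y : X | E y ((b * γ * a⁻¹) • y)} := by
      have : {y : X | E y ((b * γ * a⁻¹) • y)} =
          (fun y => (y, (b * γ * a⁻¹) • y)) ⁻¹' {p : X × X | E p.1 p.2} := rfl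
      rw [this]
      exact hEmeas.preimage (measurable_id.prodMk (hmeas _))
    have h1 : {x | E (a • x) (b • γ • x)} =
        (fun x => a • x) ⁻¹' {y : X | E y ((b * γ * a⁻¹) • y)} := by
      ext x
      simp only [Set.mem_setOf_eq, Set.mem_preimage]
      have : (b * γ * a⁻¹) • a • x = b • γ • x := by
        rw [smul_smul, smul_smul]
        congr 1
        group
      rw [this]
    have h2 : {x | E ((b * γ * a⁻¹) • x) x} = {y : X | E y ((b * γ * a⁻¹) • y)} := by
      ext y
      exact ⟨fun h => hequiv.symm h, fun h => hequiv.symm h⟩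
    rw [h1, (hmp a).measure_preimage hmsi.nullMeasurableSet, h2]
  -- each term tends to zero
  have hterm : ∀ a b : Γ, Tendsto
      (fun γ : Γ => (μ {x | E ((b * γ * a⁻¹) • x) x}).toReal) cofinite (nhds 0) := by
    intro a b
    have hinj : Function.Injective (fun γ : Γ => b * γ * a⁻¹) := by
      intro γ₁ γ₂ h
      simpa using mul_left_cancel (mul_right_cancel h)
    exact h0.comp hinj.tendsto_cofinite
  rw [tendsto_order]
  constructor
  · intro c hc
    filter_upwards with γ
    exact lt_of_lt_of_le hc ENNReal.toReal_nonneg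
  · intro c hc
    have hc3 : (0 : ENNReal) < ENNReal.ofReal (c / 3) := ENNReal.ofReal_pos.2 (by linarith)
    obtain ⟨A, hA⟩ := exists_finset_small μ hmeas S hS hSF hc3
    obtain ⟨B, hB⟩ := exists_finset_small μ hmeas T hT hTF hc3
    set NS := {x | ∀ a ∈ A, a • x ≠ S x} with hNS
    set NT := {x | ∀ b ∈ B, b • x ≠ T x} with hNT
    have hbound : ∀ γ : Γ, (μ {x | E (S x) (T (γ • x))}).toReal ≤
        (μ NS).toReal + (μ NT).toReal +
          ∑ a ∈ A, ∑ b ∈ B, (μ {x | E ((b * γ * a⁻¹) • x) x}).toReal := by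
      intro γ
      have hsub : {x | E (S x) (T (γ • x))} ⊆ (NS ∪ (fun x => γ • x) ⁻¹' NT) ∪
          ⋃ a ∈ A, ⋃ b ∈ B, {x | E (a • x) (b • γ • x)} := by
        intro x hx
        by_cases h1 : x ∈ NS
        · exact Or.inl (Or.inl h1)
        by_cases h2 : γ • x ∈ NT
        · exact Or.inl (Or.inr h2)
        · simp only [hNS, Set.mem_setOf_eq, not_forall, not_ne_iff] at h1
          simp only [hNT, Set.mem_setOf_eq, not_forall, not_ne_iff] at h2
          obtain ⟨a, ha, hax⟩ := h1
          obtain ⟨b, hb, hbx⟩ := h2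
          refine Or.inr (Set.mem_biUnion ha (Set.mem_biUnion hb ?_))
          show E (a • x) (b • γ • x)
          rw [hax, hbx]
          exact hx
      have hEN : μ (⋃ a ∈ A, ⋃ b ∈ B, {x | E (a • x) (b • γ • x)}) ≤
          ∑ a ∈ A, ∑ b ∈ B, μ {x | E ((b * γ * a⁻¹) • x) x} := by
        refine (measure_biUnion_finset_le A _).trans (Finset.sum_le_sum fun a _ => ?_)
        refine (measure_biUnion_finset_le B _).trans (Finset.sum_le_sum fun b _ => ?_)
        exact (key a b γ).le
      have hpre : μ ((fun x => γ • x) ⁻¹' NT) = μ NT :=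
        (hmp γ).measure_preimage_emb (hEmb γ) NT
      have hle : μ {x | E (S x) (T (γ • x))} ≤ μ NS + μ NT +
          ∑ a ∈ A, ∑ b ∈ B, μ {x | E ((b * γ * a⁻¹) • x) x} := by
        refine (measure_mono hsub).trans ?_
        refine (measure_union_le _ _).trans ?_
        exact add_le_add ((measure_union_le _ _).trans (by rw [hpre])) hEN
      have hne : ∀ γ' : Γ, μ {x | E (γ' • x) x} ≠ ⊤ := fun γ' => measure_ne_top μ _
      calc (μ {x | E (S x) (T (γ • x))}).toReal
          ≤ (μ NS + μ NT + ∑ a ∈ A, ∑ b ∈ B, μ {x | E ((b * γ * a⁻¹) • x) x}).toReal := by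
            refine ENNReal.toReal_mono ?_ hle
            refine ENNReal.add_ne_top.2 ⟨ENNReal.add_ne_top.2
              ⟨measure_ne_top μ _, measure_ne_top μ _⟩, ?_⟩
            exact (ENNReal.sum_lt_top.2 fun a _ =>
              ENNReal.sum_lt_top.2 fun b _ => measure_lt_top μ _).ne
        _ = (μ NS).toReal + (μ NT).toReal +
              ∑ a ∈ A, ∑ b ∈ B, (μ {x | E ((b * γ * a⁻¹) • x) x}).toReal := by
            rw [ENNReal.toReal_add, ENNReal.toReal_add (measure_ne_top μ _) (measure_ne_top μ _),
              ENNReal.toReal_sum]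
            · congr 1
              refine Finset.sum_congr rfl fun a _ => ?_
              exact ENNReal.toReal_sum fun b _ => measure_ne_top μ _
            · exact fun a _ => (ENNReal.sum_lt_top.2 fun b _ => measure_lt_top μ _).ne
            · exact ENNReal.add_ne_top.2 ⟨measure_ne_top μ _, measure_ne_top μ _⟩
            · exact (ENNReal.sum_lt_top.2 fun a _ =>
                ENNReal.sum_lt_top.2 fun b _ => measure_lt_top μ _).ne
    have hsumt : Tendsto (fun γ : Γ =>
        ∑ a ∈ A, ∑ b ∈ B, (μ {x | E ((b * γ * a⁻¹) • x) x}).toReal) cofinite (nhds 0) := by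
      have := tendsto_finset_sum A (fun a _ =>
        tendsto_finset_sum B (fun b _ => hterm a b))
      simpa using this
    have hAr : (μ NS).toReal < c / 3 :=
      (ENNReal.lt_ofReal_iff_toReal_lt (measure_ne_top μ _)).1 hA
    have hBr : (μ NT).toReal < c / 3 :=
      (ENNReal.lt_ofReal_iff_toReal_lt (measure_ne_top μ _)).1 hB
    filter_upwards [hsumt.eventually_lt_const (show (0 : ℝ) < c / 3 by linarith)] with γ hγ
    exact lt_of_le_of_lt (hbound γ) (by linarith)
end

section
/- Let Γ be an infinite countable group. Then there exists a function f : Γ → ℝ such that: f(γ) > 0 for all γ; f is symmetric (f(γ) = f(γ⁻¹) for all γ); f(γ) → 0 along the cofinite filter on Γ; f is not summable (Σ_{γ∈Γ} f(γ) = ∞); and for every subset S ⊆ Γ with Σ_{γ∈S} f(γ) < ∞ and all δ₁, δ₂ ∈ Γ, one has Σ_{γ∈S} f(δ₁γδ₂) < ∞ (i.e., the summable ideal associated to f is two-sided translation invariant). -/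
set_option maxHeartbeats 1000000


open MeasureTheory Filter Topology

namespace C0AuxLemma

variable (Γ : Type) [Group Γ] [Countable Γ] [Infinite Γ]

noncomputable def e : ℕ ≃ Γ := by
  have : Encodable Γ := Encodable.ofCountable Γ
  have : Denumerable Γ := Denumerable.ofEncodableOfInfinite Γ
  exact (Denumerable.eqv Γ).symm

open Classical in
noncomputable def w (γ : Γ) : ℕ :=
  if γ = 1 then 0 else min ((e Γ).symm γ) ((e Γ).symm γ⁻¹) + 1

variable {Γ}

lemma w_one : w Γ 1 = 0 := by simp [w]

lemma w_inv (γ : Γ) : w Γ γ⁻¹ = w Γ γ := by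
  by_cases h : γ = 1
  · simp [h]
  · simp [w, h, inv_eq_one, min_comm]

lemma w_pos {γ : Γ} (h : γ ≠ 1) : 1 ≤ w Γ γ := by simp [w, h]

lemma w_e_le (n : ℕ) : w Γ (e Γ n) ≤ n + 1 := by
  by_cases h : e Γ n = 1
  · simp [w, h]
  · simp only [w, if_neg h]
    have h1 : (e Γ).symm (e Γ n) = n := (e Γ).symm_apply_apply n
    have := min_le_left ((e Γ).symm (e Γ n)) ((e Γ).symm (e Γ n)⁻¹)
    omega

lemma w_ball_finite (R : ℕ) : {γ : Γ | w Γ γ ≤ R}.Finite := by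
  have hfin : ((e Γ '' Set.Iio R) ∪ (Inv.inv '' (e Γ '' Set.Iio R)) : Set Γ).Finite :=
    (((Set.finite_Iio R).image _).union (((Set.finite_Iio R).image _).image _))
  refine (hfin.insert 1).subset ?_
  intro γ hγ
  by_cases h : γ = 1
  · exact Set.mem_insert_iff.mpr (Or.inl h)
  · right
    simp only [w, if_neg h, Set.mem_setOf_eq] at hγ
    rcases le_total ((e Γ).symm γ) ((e Γ).symm γ⁻¹) with hc | hc
    · left
      exact ⟨(e Γ).symm γ, Set.mem_Iio.mpr (by omega), (e Γ).apply_symm_apply γ⟩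
    · right
      refine ⟨γ⁻¹, ⟨(e Γ).symm γ⁻¹, Set.mem_Iio.mpr (by omega), (e Γ).apply_symm_apply γ⁻¹⟩, inv_inv γ⟩

def wordSet (γ : Γ) : Set ℕ := {m | ∃ L : List Γ, L.prod = γ ∧ (L.map (w Γ)).sum = m}

lemma wordSet_nonempty (γ : Γ) : (wordSet γ).Nonempty := ⟨w Γ γ, [γ], by simp⟩

noncomputable def len (γ : Γ) : ℕ := sInf (wordSet γ)

lemma exists_word (γ : Γ) : ∃ L : List Γ, L.prod = γ ∧ (L.map (w Γ)).sum = len γ :=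
  Nat.sInf_mem (wordSet_nonempty γ)

lemma len_le {γ : Γ} {m : ℕ} (h : m ∈ wordSet γ) : len γ ≤ m := Nat.sInf_le h

lemma len_le_w (γ : Γ) : len γ ≤ w Γ γ := len_le ⟨[γ], by simp⟩

lemma len_mul (γ δ : Γ) : len (γ * δ) ≤ len γ + len δ := by
  obtain ⟨L, hL, hLw⟩ := exists_word γ
  obtain ⟨M, hM, hMw⟩ := exists_word δ
  exact len_le ⟨L ++ M, by simp [hL, hM], by simp [hLw, hMw]⟩

lemma len_inv_le (γ : Γ) : len γ⁻¹ ≤ len γ := by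
  obtain ⟨L, hL, hLw⟩ := exists_word γ
  refine len_le ⟨(L.map Inv.inv).reverse, ?_, ?_⟩
  · rw [← hL, List.prod_inv_reverse]
  · rw [List.map_reverse, List.sum_reverse, List.map_map, ← hLw]
    congr 1
    exact List.map_congr_left (fun x _ => w_inv x)

lemma len_inv (γ : Γ) : len γ⁻¹ = len γ :=
  le_antisymm (len_inv_le γ) (by simpa using len_inv_le γ⁻¹)

lemma reduce (L : List Γ) :
    ∃ L' : List Γ, L'.prod = L.prod ∧ ((L'.map (w Γ)).sum = (L.map (w Γ)).sum) ∧
      ∀ s ∈ L', s ≠ 1 := by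
  induction L with
  | nil => exact ⟨[], rfl, rfl, by simp⟩
  | cons a T ih =>
    obtain ⟨T', h1, h2, h3⟩ := ih
    by_cases h : a = 1
    · exact ⟨T', by simp [h1, h], by simp [h2, h, w_one], h3⟩
    · refine ⟨a :: T', by simp [h1], by simp [h2], ?_⟩
      intro s hs
      rcases List.mem_cons.mp hs with rfl | hs
      · exact h
      · exact h3 s hs

lemma len_ball_finite : ∀ R : ℕ, {γ : Γ | len γ ≤ R}.Finite := by
  intro R
  induction R using Nat.strong_induction_on with
  | _ R ih =>
    have hsub : {γ : Γ | len γ ≤ R} ⊆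
        insert (1 : Γ)
          (⋃ s ∈ {s : Γ | w Γ s ≤ R ∧ s ≠ 1}, (fun x => s * x) '' {γ : Γ | len γ ≤ R - w Γ s}) := by
      intro γ hγ
      by_cases h1 : γ = 1
      · exact Set.mem_insert_iff.mpr (Or.inl h1)
      · right
        obtain ⟨L, hL, hLw⟩ := exists_word γ
        obtain ⟨L', hp, hs, hne⟩ := reduce L
        have hLw' : (L'.map (w Γ)).sum = len γ := by rw [hs, hLw]
        cases hM : L' with
        | nil => exact absurd (by rw [← hL, ← hp, hM, List.prod_nil]) h1
        | cons s T =>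
          have hsne : s ≠ 1 := hne s (by rw [hM]; exact List.mem_cons_self)
          have hws : 1 ≤ w Γ s := w_pos hsne
          have hsum : w Γ s + (T.map (w Γ)).sum = len γ := by
            rw [← hLw', hM]; simp
          have hlenγ : len γ ≤ R := hγ
          have hwsR : w Γ s ≤ R := by omega
          have hT : len T.prod ≤ R - w Γ s := by
            have : len T.prod ≤ (T.map (w Γ)).sum := len_le ⟨T, rfl, rfl⟩
            omega
          refine Set.mem_biUnion (show s ∈ {s : Γ | w Γ s ≤ R ∧ s ≠ 1} from ⟨hwsR, hsne⟩) ?_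
          refine ⟨T.prod, hT, ?_⟩
          rw [← hL, ← hp, hM, List.prod_cons]
    refine (Set.Finite.insert 1 ?_).subset hsub
    refine Set.Finite.biUnion ((w_ball_finite R).subset (fun s hs => hs.1)) ?_
    intro s hs
    refine Set.Finite.image _ (ih (R - w Γ s) ?_)
    have := w_pos hs.2
    have := hs.1
    omega

lemma len_e_le (n : ℕ) : len (e Γ n) ≤ n + 1 := (len_le_w _).trans (w_e_le n)

lemma tendsto_len : Tendsto (fun γ : Γ => len γ) cofinite atTop := by
  rw [Filter.tendsto_atTop]
  intro b
  rw [Filter.eventually_cofinite]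
  exact (len_ball_finite b).subset fun γ hγ => le_of_lt (not_le.mp hγ)

end C0AuxLemma

open C0AuxLemma in
/-- Lemma 3.9: every infinite countable group `Γ` carries a positive, symmetric
function `f ∈ c₀(Γ) \ ℓ¹(Γ)` whose associated summable ideal is two-sided
translation invariant. -/
theorem exists_c0_not_summable_invariant_ideal
    (Γ : Type) [Group Γ] [Countable Γ] [Infinite Γ] :
    ∃ f : Γ → ℝ, (∀ γ, 0 < f γ) ∧ (∀ γ, f γ = f γ⁻¹) ∧
      Tendsto f cofinite (nhds 0) ∧
      ¬ Summable f ∧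
      ∀ S : Set Γ, Summable (fun γ : S => f γ) →
        ∀ δ₁ δ₂ : Γ, Summable (fun γ : S => f (δ₁ * γ * δ₂)) := by
  classical
  refine ⟨fun γ => ((len γ : ℝ) + 1)⁻¹, ?_, ?_, ?_, ?_, ?_⟩
  · intro γ; positivity
  · intro γ; simp only [len_inv]
  · -- tendsto
    have h1 : Tendsto (fun γ : Γ => ((len γ : ℝ) + 1)) cofinite atTop := by
      apply Filter.tendsto_atTop_add_const_right
      exact tendsto_natCast_atTop_atTop.comp tendsto_len
    exact tendsto_inv_atTop_zero.comp h1
  · -- not summable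
    intro hsum
    have h2 : Summable (fun n : ℕ => ((len (e Γ n) : ℝ) + 1)⁻¹) :=
      (Equiv.summable_iff (e Γ)).mpr hsum
    have h3 : Summable (fun n : ℕ => ((n : ℝ) + 2)⁻¹) := by
      refine h2.of_nonneg_of_le (fun n => by positivity) (fun n => ?_)
      have h4 : (len (e Γ n) : ℝ) + 1 ≤ (n : ℝ) + 2 := by
        have := len_e_le (Γ := Γ) n
        have : (len (e Γ n) : ℝ) ≤ (n : ℝ) + 1 := by exact_mod_cast this
        linarith
      exact inv_anti₀ (by positivity) h4
    have hc' : Summable (fun n : ℕ => (((n + 2 : ℕ) : ℝ))⁻¹) := by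
      refine h3.congr (fun n => ?_)
      push_cast
      ring_nf
    have := (summable_nat_add_iff (f := fun n : ℕ => ((n : ℝ))⁻¹) 2).mp hc'
    exact Real.not_summable_natCast_inv this
  · -- invariance
    intro S hS δ₁ δ₂
    set K : ℕ := len δ₁ + len δ₂ with hK
    refine Summable.of_nonneg_of_le (fun γ => by positivity)
      (fun γ => ?_) (hS.mul_left ((K : ℝ) + 1))
    have hlen : len (γ : Γ) ≤ K + len (δ₁ * γ * δ₂) := by
      have h1 : len ((δ₁⁻¹ * (δ₁ * γ * δ₂)) * δ₂⁻¹) ≤ len (δ₁⁻¹ * (δ₁ * γ * δ₂)) + len δ₂⁻¹ :=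
        len_mul _ _
      have h2 : len (δ₁⁻¹ * (δ₁ * γ * δ₂)) ≤ len δ₁⁻¹ + len (δ₁ * γ * δ₂) := len_mul _ _
      have h3 : (δ₁⁻¹ * (δ₁ * γ * δ₂)) * δ₂⁻¹ = (γ : Γ) := by group
      rw [h3] at h1
      rw [len_inv] at h1 h2
      omega
    have hpos1 : (0 : ℝ) < (len (δ₁ * γ * δ₂) : ℝ) + 1 := by positivity
    have hpos2 : (0 : ℝ) < (len (γ : Γ) : ℝ) + 1 := by positivity
    have hc : (len (γ : Γ) : ℝ) ≤ (K : ℝ) + (len (δ₁ * γ * δ₂) : ℝ) := by exact_mod_cast hlen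
    have h6 : (1 : ℝ) / ((len (δ₁ * γ * δ₂) : ℝ) + 1) ≤
        ((K : ℝ) + 1) / ((len (γ : Γ) : ℝ) + 1) := by
      rw [div_le_div_iff₀ hpos1 hpos2]
      nlinarith [Nat.cast_nonneg (α := ℝ) K, Nat.cast_nonneg (α := ℝ) (len (δ₁ * γ * δ₂))]
    simpa [one_div, div_eq_mul_inv] using h6
end

section
/- Let Γ be a countable group with a free, measure-preserving, ergodic action on a standard probability space (X,μ), let A ⊆ X be a Borel set with μ(A) > 0, and let E_A be a countable Borel equivalence relation on A with E_A ⊆ E^X_Γ|A such that μ({x ∈ A : γ·x ∈ A and γ·x E_A x}) → 0 along the cofinite filter on Γ. Then there exists a countable Borel equivalence relation E on X with E ⊆ E^X_Γ, E|A = E_A, and φ_E(γ) = μ({x : γ·x E x}) → 0 along the cofinite filter on Γ. Moreover, if E_A is ergodic (every Borel subset of A that is a union of E_A-classes is μ-null or has full measure in A), then E can be chosen ergodic. -/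
open MeasureTheory Filter Topology

/-- Lemma 4.2: given a free, measure-preserving, ergodic action of `Γ` on
`(X, μ)`, a positive-measure Borel set `A`, and a countable Borel equivalence
relation `E_A` on `A` contained in `E^X_Γ|A` with
`μ({x ∈ A : γ·x ∈ A and γ·x E_A x}) → 0` as `γ → ∞`, there is a countable
Borel equivalence relation `E ⊆ E^X_Γ` on `X` with `E|A = E_A` and
`φ_E(γ) → 0` as `γ → ∞`; moreover, if `E_A` is ergodic then `E` can be chosen
ergodic. -/
theorem extend_relation_with_vanishing_phiE
    {X : Type} [MeasurableSpace X] [StandardBorelSpace X]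
    (μ : Measure X) [IsProbabilityMeasure μ]
    {Γ : Type} [Group Γ] [Countable Γ] [MulAction Γ X]
    (hmeas : ∀ γ : Γ, Measurable fun x : X => γ • x)
    (hmp : ∀ γ : Γ, MeasurePreserving (fun x : X => γ • x) μ μ)
    (hfree : ∀ᵐ x ∂μ, ∀ γ : Γ, γ ≠ 1 → γ • x ≠ x)
    (herg : ∀ B : Set X, MeasurableSet B →
      (∀ γ : Γ, (fun x : X => γ • x) ⁻¹' B = B) → μ B = 0 ∨ μ Bᶜ = 0)
    (A : Set X) (hA : MeasurableSet A) (hApos : 0 < μ A)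
    (EA : X → X → Prop)
    (hEAdom : ∀ x y, EA x y → x ∈ A ∧ y ∈ A)
    (hEArefl : ∀ x ∈ A, EA x x)
    (hEAsymm : ∀ x y, EA x y → EA y x)
    (hEAtrans : ∀ x y z, EA x y → EA y z → EA x z)
    (hEAmeas : MeasurableSet {p : X × X | EA p.1 p.2})
    (hEAcount : ∀ x, {y | EA x y}.Countable)
    (hEAF : ∀ x y, EA x y → ∃ γ : Γ, γ • x = y)
    (h0 : Tendsto
      (fun γ : Γ => (μ {x | x ∈ A ∧ γ • x ∈ A ∧ EA (γ • x) x}).toReal)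
      cofinite (nhds 0)) :
    ∃ E : X → X → Prop, Equivalence E ∧
      MeasurableSet {p : X × X | E p.1 p.2} ∧
      (∀ x, {y | E x y}.Countable) ∧
      (∀ x y, E x y → ∃ γ : Γ, γ • x = y) ∧
      (∀ x ∈ A, ∀ y ∈ A, (E x y ↔ EA x y)) ∧
      Tendsto (fun γ : Γ => (μ {x | E (γ • x) x}).toReal) cofinite (nhds 0) ∧
      ((∀ B ⊆ A, MeasurableSet B → (∀ x y, EA x y → (x ∈ B ↔ y ∈ B)) →
          μ B = 0 ∨ μ B = μ A) →
        ∀ B : Set X, MeasurableSet B → (∀ x y, E x y → (x ∈ B ↔ y ∈ B)) →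
          μ B = 0 ∨ μ Bᶜ = 0) := by
  classical
  -- enumeration of Γ starting with 1
  obtain ⟨e, he⟩ := exists_surjective_nat Γ
  set g : ℕ → Γ := fun k => if k = 0 then 1 else e (k - 1) with hgdef
  have hg0 : g 0 = 1 := by simp [hgdef]
  have hgsurj : Function.Surjective g := by
    intro γ
    obtain ⟨n, hn⟩ := he γ
    exact ⟨n + 1, by simp [hgdef, hn]⟩
  -- the saturation of A and the return map π
  set D : Set X := {x | ∃ n, g n • x ∈ A} with hDdef
  have hAD : A ⊆ D := fun x hx => ⟨0, by simpa [hg0] using hx⟩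
  set idx : X → ℕ := fun x => if h : x ∈ D then Nat.find h else 0 with hidxdef
  set π : X → X := fun x => g (idx x) • x with hπdef
  have hπA : ∀ x ∈ A, π x = x := by
    intro x hx
    have hxD : x ∈ D := hAD hx
    have : idx x = 0 := by
      rw [hidxdef]
      simp only [dif_pos hxD]
      rw [Nat.find_eq_zero]
      simpa [hg0] using hx
    simp [hπdef, this, hg0]
  have hπmemD : ∀ x ∈ D, π x ∈ A := by
    intro x hx
    have := Nat.find_spec hx
    simpa [hπdef, hidxdef, dif_pos hx] using this
  have hπnotD : ∀ x ∉ D, π x = x := by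
    intro x hx
    simp [hπdef, hidxdef, dif_neg hx, hg0]
  have hπD : ∀ x, π x ∈ A → x ∈ D := by
    intro x hx
    by_contra hxD
    rw [hπnotD x hxD] at hx
    exact hxD (hAD hx)
  have hidxlt : ∀ x, x ∈ D → ∀ k < idx x, g k • x ∉ A := by
    intro x hx k hk
    rw [hidxdef] at hk
    simp only [dif_pos hx] at hk
    exact Nat.find_min hx hk
  -- the extended relation
  set E : X → X → Prop := fun x y => EA (π x) (π y) ∨ x = y with hEdef
  -- measurability of π
  have hDmeas : MeasurableSet D := by
    have : D = ⋃ n, (fun x => g n • x) ⁻¹' A := by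
      ext x; simp [hDdef]
    rw [this]
    exact MeasurableSet.iUnion fun n => hmeas (g n) hA
  have hidxmeas : Measurable idx := by
    apply measurable_to_countable'
    intro k
    match k with
    | 0 =>
      have : idx ⁻¹' {0} = A ∪ Dᶜ := by
        ext x
        simp only [Set.mem_preimage, Set.mem_singleton_iff, Set.mem_union, Set.mem_compl_iff]
        constructor
        · intro h
          by_cases hxD : x ∈ D
          · left
            have h2 := hπmemD x hxD
            simp only [hπdef, h, hg0, one_smul] at h2
            exact h2
          · right; exact hxD
        · rintro (h | h)
          · have hxD : x ∈ D := hAD h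
            rw [hidxdef]
            simp only [dif_pos hxD]
            rw [Nat.find_eq_zero]
            simpa [hg0] using h
          · rw [hidxdef]; simp [dif_neg h]
      rw [this]
      exact hA.union hDmeas.compl
    | k + 1 =>
      have : idx ⁻¹' {k + 1} =
          (fun x => g (k + 1) • x) ⁻¹' A ∩ ⋂ j, ⋂ (_ : j < k + 1), (fun x => g j • x) ⁻¹' Aᶜ := by
        ext x
        simp only [Set.mem_preimage, Set.mem_singleton_iff, Set.mem_inter_iff, Set.mem_iInter,
          Set.mem_compl_iff]
        constructor
        · intro h
          have hxD : x ∈ D := by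
            by_contra hxD
            rw [hidxdef] at h
            simp [dif_neg hxD] at h
          rw [hidxdef] at h
          simp only [dif_pos hxD] at h
          rw [Nat.find_eq_iff] at h
          exact ⟨h.1, fun j hj => h.2 j hj⟩
        · rintro ⟨h1, h2⟩
          have hxD : x ∈ D := ⟨k + 1, h1⟩
          rw [hidxdef]
          simp only [dif_pos hxD]
          rw [Nat.find_eq_iff]
          exact ⟨h1, fun j hj => h2 j hj⟩
      rw [this]
      exact (hmeas (g (k + 1)) hA).inter
        (MeasurableSet.iInter fun j => MeasurableSet.iInter fun _ => hmeas (g j) hA.compl)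
  have hπmeas : Measurable π := by
    intro s hs
    have : π ⁻¹' s = ⋃ k, (idx ⁻¹' {k}) ∩ (fun x => g k • x) ⁻¹' s := by
      ext x
      simp only [Set.mem_preimage, Set.mem_iUnion, Set.mem_inter_iff, Set.mem_singleton_iff]
      constructor
      · intro h; exact ⟨idx x, rfl, h⟩
      · rintro ⟨k, hk, h⟩; rw [hπdef]; simpa [hk] using h
    rw [this]
    exact MeasurableSet.iUnion fun k =>
      (hidxmeas (MeasurableSet.singleton k)).inter (hmeas (g k) hs)
  -- basic facts about E restricted to A
  have hEres : ∀ x ∈ A, ∀ y ∈ A, (E x y ↔ EA x y) := by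
    intro x hx y hy
    rw [hEdef]
    simp only
    rw [hπA x hx, hπA y hy]
    constructor
    · rintro (h | rfl)
      · exact h
      · exact hEArefl x hx
    · exact Or.inl
  -- Equivalence
  have hequiv : Equivalence E := by
    constructor
    · intro x; exact Or.inr rfl
    · intro x y h
      rcases h with h | rfl
      · exact Or.inl (hEAsymm _ _ h)
      · exact Or.inr rfl
    · intro x y z hxy hyz
      rcases hxy with hxy | rfl
      · rcases hyz with hyz | rfl
        · exact Or.inl (hEAtrans _ _ _ hxy hyz)
        · exact Or.inl hxy
      · exact hyz
  -- measurability of E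
  have hEmeas : MeasurableSet {p : X × X | E p.1 p.2} := by
    have h1 : {p : X × X | E p.1 p.2} =
        (fun p : X × X => (π p.1, π p.2)) ⁻¹' {p : X × X | EA p.1 p.2} ∪
          {p : X × X | p.1 = p.2} := by
      ext p; simp [hEdef]
    rw [h1]
    refine MeasurableSet.union ?_ ?_
    · exact ((hπmeas.comp measurable_fst).prodMk (hπmeas.comp measurable_snd)) hEAmeas
    · letI := upgradeStandardBorel X
      exact isClosed_diagonal.measurableSet
  -- countable classes
  have hEcount : ∀ x, {y | E x y}.Countable := by
    intro x
    have hsub : {y | E x y} ⊆ {x} ∪ ⋃ n, (fun z => (g n)⁻¹ • z) '' {z | EA (π x) z} := by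
      intro y hy
      rcases hy with hy | rfl
      · right
        refine Set.mem_iUnion.mpr ⟨idx y, ⟨π y, hy, ?_⟩⟩
        rw [hπdef]
        simp only
        rw [inv_smul_smul]
      · left; rfl
    refine Set.Countable.mono hsub ?_
    exact (Set.countable_singleton x).union
      (Set.countable_iUnion fun n => (hEAcount (π x)).image _)
  -- E is contained in the orbit equivalence relation
  have hEF : ∀ x y, E x y → ∃ γ : Γ, γ • x = y := by
    intro x y h
    rcases h with h | rfl
    · obtain ⟨δ, hδ⟩ := hEAF _ _ h
      refine ⟨(g (idx y))⁻¹ * (δ * g (idx x)), ?_⟩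
      have hπx : π x = g (idx x) • x := rfl
      have hπy : π y = g (idx y) • y := rfl
      rw [mul_smul, mul_smul, ← hπx, hδ, hπy, inv_smul_smul]
    · exact ⟨1, one_smul _ _⟩
  -- invariance and nullity of Dᶜ
  have hDinv : ∀ γ : Γ, (fun x => γ • x) ⁻¹' D = D := by
    intro γ
    ext x
    simp only [Set.mem_preimage, hDdef, Set.mem_setOf_eq]
    constructor
    · rintro ⟨n, hn⟩
      obtain ⟨m, hm⟩ := hgsurj (g n * γ)
      exact ⟨m, by rw [hm, mul_smul]; exact hn⟩
    · rintro ⟨n, hn⟩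
      obtain ⟨m, hm⟩ := hgsurj (g n * γ⁻¹)
      refine ⟨m, ?_⟩
      rw [hm, mul_smul, inv_smul_smul]
      exact hn
  have hDco : μ Dᶜ = 0 := by
    rcases herg D hDmeas hDinv with h | h
    · exact absurd (measure_mono_null hAD h) hApos.ne'
    · exact h
  -- the sets used in the h0 hypothesis
  set S : Γ → Set X := fun γ => {x | x ∈ A ∧ γ • x ∈ A ∧ EA (γ • x) x} with hSdef
  have hSmeas : ∀ γ, MeasurableSet (S γ) := by
    intro γ
    have : S γ = A ∩ ((fun x => γ • x) ⁻¹' A ∩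
        (fun x => (γ • x, x)) ⁻¹' {p : X × X | EA p.1 p.2}) := by
      exact Set.ext fun x =>
        ⟨fun h => ⟨h.1, h.2.1, h.2.2⟩, fun h => ⟨h.1, h.2.1, h.2.2⟩⟩
    rw [this]
    exact hA.inter ((hmeas γ hA).inter (((hmeas γ).prodMk measurable_id) hEAmeas))
  have h0' : Tendsto (fun γ : Γ => μ (S γ)) cofinite (nhds 0) := by
    have heq : (fun γ : Γ => μ (S γ)) =
        fun γ => ENNReal.ofReal ((μ (S γ)).toReal) := by
      funext γ
      rw [ENNReal.ofReal_toReal (measure_ne_top μ _)]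
    rw [heq]
    have h2 := (ENNReal.continuous_ofReal.tendsto 0).comp h0
    rw [ENNReal.ofReal_zero] at h2
    exact h2
  -- the tail sets
  set T : ℕ → Set X := fun N => {x | ∀ j < N, g j • x ∉ A} with hTdef
  have hTmeas : ∀ N, MeasurableSet (T N) := by
    intro N
    have : T N = ⋂ j, ⋂ (_ : j < N), (fun x => g j • x) ⁻¹' Aᶜ := by
      ext x; simp [hTdef]
    rw [this]
    exact MeasurableSet.iInter fun j => MeasurableSet.iInter fun _ => hmeas (g j) hA.compl
  have hTanti : Antitone T := by
    intro M N hMN x hx j hj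
    exact hx j (lt_of_lt_of_le hj hMN)
  have hTiInter : ⋂ N, T N = Dᶜ := by
    ext x
    simp only [Set.mem_iInter, hTdef, Set.mem_setOf_eq, Set.mem_compl_iff, hDdef, not_exists]
    constructor
    · intro h n
      exact h (n + 1) n (Nat.lt_succ_self n)
    · intro h N j _
      exact h j
  have hTtend : Tendsto (fun N => μ (T N)) atTop (nhds 0) := by
    have := tendsto_measure_iInter_atTop (μ := μ) (s := T)
      (fun N => (hTmeas N).nullMeasurableSet) hTanti ⟨0, measure_ne_top μ _⟩
    rw [hTiInter, hDco] at this
    exact this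
  -- the main estimate, in ℝ≥0∞
  have hmain : Tendsto (fun γ : Γ => μ {x | E (γ • x) x}) cofinite (nhds 0) := by
    rw [ENNReal.tendsto_nhds_zero]
    intro ε hε
    have hε4 : (0 : ENNReal) < ε / 4 := ENNReal.div_pos hε.ne' (by norm_num)
    -- choose N so that the tail has small measure
    obtain ⟨N, hN⟩ := (eventually_atTop.mp
      ((ENNReal.tendsto_nhds_zero.mp hTtend (ε / 4) hε4)))
    have hTN : μ (T N) ≤ ε / 4 := hN N le_rfl
    set δ₀ : ENNReal := ε / 4 / ((N * N : ℕ) : ENNReal) with hδ₀def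
    have hδ₀pos : 0 < δ₀ := ENNReal.div_pos hε4.ne' (ENNReal.natCast_ne_top _)
    -- eventually all the finitely many translated h0-sets are small
    have hev2 : ∀ᶠ γ : Γ in cofinite, ∀ p ∈ Finset.range N ×ˢ Finset.range N,
        μ (S (g p.1 * γ * (g p.2)⁻¹)) ≤ δ₀ := by
      rw [eventually_all_finset]
      intro p _
      have hinj : Function.Injective (fun γ : Γ => g p.1 * γ * (g p.2)⁻¹) := by
        intro a b hab
        simp only at hab
        exact mul_left_cancel (mul_right_cancel hab)
      have := h0'.comp hinj.tendsto_cofinite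
      exact ENNReal.tendsto_nhds_zero.mp this δ₀ hδ₀pos
    filter_upwards [eventually_cofinite_ne (1 : Γ), hev2] with γ hγ1 hγ2
    -- the key inclusion
    have hkey : {x | E (γ • x) x} ⊆ {x | γ • x = x} ∪
        (T N ∪ ((fun x => γ • x) ⁻¹' T N ∪
          ⋃ p ∈ Finset.range N ×ˢ Finset.range N,
            (fun x => g p.2 • x) ⁻¹' S (g p.1 * γ * (g p.2)⁻¹))) := by
      intro x hx
      rcases hx with hx | hx
      · -- the EA case
        have hxD : x ∈ D := hπD x (hEAdom _ _ hx).2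
        have hyD : γ • x ∈ D := hπD _ (hEAdom _ _ hx).1
        right
        by_cases hn : N ≤ idx x
        · left
          intro j hj
          exact hidxlt x hxD j (lt_of_lt_of_le hj hn)
        · by_cases hm : N ≤ idx (γ • x)
          · right; left
            intro j hj
            exact hidxlt _ hyD j (lt_of_lt_of_le hj hm)
          · right; right
            push_neg at hn hm
            refine Set.mem_iUnion.mpr ⟨(idx (γ • x), idx x), Set.mem_iUnion.mpr
              ⟨Finset.mem_product.mpr ⟨Finset.mem_range.mpr hm, Finset.mem_range.mpr hn⟩, ?_⟩⟩
            show g (idx x) • x ∈ S (g (idx (γ • x)) * γ * (g (idx x))⁻¹)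
            have hc : (g (idx (γ • x)) * γ * (g (idx x))⁻¹) • g (idx x) • x
                = π (γ • x) := by
              rw [hπdef]
              simp only
              rw [← mul_smul, ← mul_smul]
              congr 1
              group
            refine ⟨hπmemD x hxD, ?_, ?_⟩
            · rw [hc]; exact hπmemD _ hyD
            · rw [hc]
              exact hx
      · left; exact hx
    -- measure estimate
    have hfix : μ {x | γ • x = x} = 0 := by
      refine measure_mono_null ?_ (ae_iff.mp hfree)
      intro x hx
      simp only [Set.mem_setOf_eq] at hx ⊢
      push_neg
      exact ⟨γ, hγ1, hx⟩
    have hsum : μ (⋃ p ∈ Finset.range N ×ˢ Finset.range N,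
        (fun x => g p.2 • x) ⁻¹' S (g p.1 * γ * (g p.2)⁻¹)) ≤ ε / 4 := by
      refine le_trans (measure_biUnion_finset_le _ _) ?_
      have hcard : (Finset.range N ×ˢ Finset.range N).card = N * N := by
        simp [Finset.card_product]
      have hle : ∀ p ∈ Finset.range N ×ˢ Finset.range N,
          μ ((fun x => g p.2 • x) ⁻¹' S (g p.1 * γ * (g p.2)⁻¹)) ≤ δ₀ := by
        intro p hp
        rw [(hmp (g p.2)).measure_preimage (hSmeas _).nullMeasurableSet]
        exact hγ2 p hp
      refine le_trans (Finset.sum_le_card_nsmul _ _ δ₀ hle) ?_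
      rw [hcard, nsmul_eq_mul, hδ₀def]
      exact ENNReal.mul_div_le
    have hpre : μ ((fun x => γ • x) ⁻¹' T N) = μ (T N) :=
      (hmp γ).measure_preimage (hTmeas N).nullMeasurableSet
    calc μ {x | E (γ • x) x}
        ≤ μ ({x | γ • x = x} ∪ (T N ∪ ((fun x => γ • x) ⁻¹' T N ∪
            ⋃ p ∈ Finset.range N ×ˢ Finset.range N,
              (fun x => g p.2 • x) ⁻¹' S (g p.1 * γ * (g p.2)⁻¹)))) := measure_mono hkey
      _ ≤ μ {x | γ • x = x} + (μ (T N) + (μ ((fun x => γ • x) ⁻¹' T N) +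
            μ (⋃ p ∈ Finset.range N ×ˢ Finset.range N,
              (fun x => g p.2 • x) ⁻¹' S (g p.1 * γ * (g p.2)⁻¹)))) := by
          refine le_trans (measure_union_le _ _) ?_
          refine add_le_add le_rfl ?_
          refine le_trans (measure_union_le _ _) ?_
          exact add_le_add le_rfl (measure_union_le _ _)
      _ ≤ 0 + (ε / 4 + (ε / 4 + ε / 4)) := by
          rw [hfix, hpre]
          exact add_le_add le_rfl (add_le_add hTN (add_le_add hTN hsum))
      _ ≤ ε / 3 + (ε / 3 + ε / 3) := by
          rw [zero_add]
          have h43 : ε / 4 ≤ ε / 3 := ENNReal.div_le_div_left (by norm_num) ε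
          exact add_le_add h43 (add_le_add h43 h43)
      _ = ε := by rw [← add_assoc]; exact ENNReal.add_thirds ε
  -- convert to toReal
  have hφ : Tendsto (fun γ : Γ => (μ {x | E (γ • x) x}).toReal) cofinite (nhds 0) := by
    have := (ENNReal.tendsto_toReal (a := 0) (by norm_num)).comp hmain
    simpa [Function.comp_def] using this
  -- the ergodicity statement
  have hergE : (∀ B ⊆ A, MeasurableSet B → (∀ x y, EA x y → (x ∈ B ↔ y ∈ B)) →
      μ B = 0 ∨ μ B = μ A) →
      ∀ B : Set X, MeasurableSet B → (∀ x y, E x y → (x ∈ B ↔ y ∈ B)) →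
      μ B = 0 ∨ μ Bᶜ = 0 := by
    intro hErgA
    have claim : ∀ C : Set X, MeasurableSet C → (∀ x y, E x y → (x ∈ C ↔ y ∈ C)) →
        μ (C ∩ A) = 0 → μ C = 0 := by
      intro C hC hCinv hCA
      have h1 : C ⊆ (⋃ n, (fun x => g n • x) ⁻¹' (C ∩ A)) ∪ Dᶜ := by
        intro x hx
        by_cases hxD : x ∈ D
        · left
          refine Set.mem_iUnion.mpr ⟨idx x, ?_⟩
          have hπxA : π x ∈ A := hπmemD x hxD
          have hExπ : E x (π x) := by
            left
            rw [hπA (π x) hπxA]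
            exact hEArefl _ hπxA
          have hπxC : π x ∈ C := (hCinv x (π x) hExπ).mp hx
          exact ⟨hπxC, hπxA⟩
        · right; exact hxD
      refine le_antisymm ?_ zero_le
      calc μ C ≤ μ (⋃ n, (fun x => g n • x) ⁻¹' (C ∩ A)) + μ Dᶜ :=
            le_trans (measure_mono h1) (measure_union_le _ _)
        _ = 0 := by
            rw [hDco, add_zero]
            refine measure_iUnion_null fun n => ?_
            rw [(hmp (g n)).measure_preimage ((hC.inter hA).nullMeasurableSet)]
            exact hCA
    intro B hB hBinv
    have hBAinv : ∀ x y, EA x y → (x ∈ B ∩ A ↔ y ∈ B ∩ A) := by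
      intro x y hxy
      obtain ⟨hx, hy⟩ := hEAdom _ _ hxy
      have hE : E x y := by
        left
        rw [hπA x hx, hπA y hy]
        exact hxy
      constructor
      · rintro ⟨h1, _⟩; exact ⟨(hBinv x y hE).mp h1, hy⟩
      · rintro ⟨h1, _⟩; exact ⟨(hBinv x y hE).mpr h1, hx⟩
    rcases hErgA (B ∩ A) Set.inter_subset_right (hB.inter hA) hBAinv with h | h
    · exact Or.inl (claim B hB hBinv h)
    · right
      refine claim Bᶜ hB.compl (fun x y hxy => not_iff_not.mpr (hBinv x y hxy)) ?_
      -- μ (Bᶜ ∩ A) = 0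
      have hd : μ (A ∩ B) + μ (A \ B) = μ A := measure_inter_add_diff A hB
      rw [Set.inter_comm] at h
      rw [h] at hd
      have h3 : μ (A \ B) = 0 := by
        by_contra hne
        have hlt : μ A < μ A + μ (A \ B) :=
          ENNReal.lt_add_right (measure_ne_top μ A) hne
        rw [hd] at hlt
        exact lt_irrefl _ hlt
      rw [Set.inter_comm, ← Set.diff_eq]
      exact h3
  exact ⟨E, hequiv, hEmeas, hEcount, hEF, hEres, hφ, hergE⟩
end

section
/- Let Γ be a countable group with Kazhdan pair (Q,ε), let δ > 0, and let φ : Γ → ℂ be a positive-definite function with φ(1) = 1. If Re φ(γ) ≥ 1 − δ²ε²/2 for every γ ∈ Q, then Re φ(γ) ≥ 1 − 2δ² for every γ ∈ Γ. -/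
open MeasureTheory Filter Topology
open scoped ComplexOrder

/-- `(Q, ε)` is a Kazhdan pair for `Γ`. -/
def IsKazhdanPair (Γ : Type*) [Group Γ] (Q : Set Γ) (ε : ℝ) : Prop :=
  Q.Finite ∧ Subgroup.closure Q = ⊤ ∧ 0 < ε ∧
  ∀ (H : Type) [NormedAddCommGroup H] [InnerProductSpace ℂ H] [CompleteSpace H]
    (π : Γ →* (H →L[ℂ] H)), (∀ (γ : Γ) (ξ : H), ‖π γ ξ‖ = ‖ξ‖) →
    (∃ ξ : H, ∀ γ ∈ Q, ‖π γ ξ - ξ‖ < ε * ‖ξ‖) →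
    ∃ η : H, η ≠ 0 ∧ ∀ γ : Γ, π γ η = η

/-- `φ : Γ → ℂ` is positive-definite. -/
def IsPositiveDefinite {Γ : Type*} [Group Γ] (φ : Γ → ℂ) : Prop :=
  ∀ (n : ℕ) (g : Fin n → Γ) (α : Fin n → ℂ),
    0 ≤ ∑ i, ∑ j, (starRingEnd ℂ) (α i) * α j * φ ((g i)⁻¹ * g j)

set_option synthInstance.maxHeartbeats 800000
set_option maxHeartbeats 1600000

namespace KazhdanGNS
variable {Γ : Type} [Group Γ]

noncomputable def B (φ : Γ → ℂ) (f g : Γ →₀ ℂ) : ℂ :=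
  ∑ x ∈ f.support, ∑ y ∈ g.support, (starRingEnd ℂ) (f x) * g y * φ (x⁻¹ * y)

theorem B_eq (φ : Γ → ℂ) (f g : Γ →₀ ℂ) {s t : Finset Γ}
    (hs : f.support ⊆ s) (ht : g.support ⊆ t) :
    B φ f g = ∑ x ∈ s, ∑ y ∈ t, (starRingEnd ℂ) (f x) * g y * φ (x⁻¹ * y) := by
  unfold B
  have h1 : ∀ x : Γ, ∑ y ∈ g.support, (starRingEnd ℂ) (f x) * g y * φ (x⁻¹ * y)
      = ∑ y ∈ t, (starRingEnd ℂ) (f x) * g y * φ (x⁻¹ * y) := fun x =>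
    Finset.sum_subset ht (fun y _ hy => by
      rw [Finsupp.notMem_support_iff.mp hy]; ring)
  simp_rw [h1]
  exact Finset.sum_subset hs (fun x _ hx => by
    rw [Finsupp.notMem_support_iff.mp hx]; simp)

theorem B_add_left (φ : Γ → ℂ) [DecidableEq Γ] (f₁ f₂ g : Γ →₀ ℂ) :
    B φ (f₁ + f₂) g = B φ f₁ g + B φ f₂ g := by
  rw [B_eq φ (f₁ + f₂) g Finsupp.support_add (subset_refl _),
      B_eq φ f₁ g Finset.subset_union_left (subset_refl _),
      B_eq φ f₂ g Finset.subset_union_right (subset_refl _),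
      ← Finset.sum_add_distrib]
  refine Finset.sum_congr rfl fun x _ => ?_
  rw [← Finset.sum_add_distrib]
  refine Finset.sum_congr rfl fun y _ => ?_
  simp only [Finsupp.add_apply, map_add]; ring

theorem B_smul_left (φ : Γ → ℂ) (r : ℂ) (f g : Γ →₀ ℂ) :
    B φ (r • f) g = (starRingEnd ℂ) r * B φ f g := by
  rw [B_eq φ (r • f) g Finsupp.support_smul (subset_refl _), B, Finset.mul_sum]
  refine Finset.sum_congr rfl fun x _ => ?_
  rw [Finset.mul_sum]
  refine Finset.sum_congr rfl fun y _ => ?_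
  simp only [Finsupp.smul_apply, smul_eq_mul, map_mul]; ring

theorem B_conj (φ : Γ → ℂ) (hh : ∀ γ : Γ, (starRingEnd ℂ) (φ γ) = φ γ⁻¹) (f g : Γ →₀ ℂ) :
    (starRingEnd ℂ) (B φ g f) = B φ f g := by
  unfold B
  simp only [map_sum, map_mul, Complex.conj_conj, hh, mul_inv_rev, inv_inv]
  rw [Finset.sum_comm]
  exact Finset.sum_congr rfl fun y _ => Finset.sum_congr rfl fun x _ => by ring

theorem B_self_nonneg (φ : Γ → ℂ) (hφ : IsPositiveDefinite φ) (f : Γ →₀ ℂ) :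
    0 ≤ B φ f f := by
  classical
  set s := f.support with hs
  let e := s.equivFin
  have key := hφ s.card (fun i => ((e.symm i : s) : Γ)) (fun i => f ((e.symm i : s) : Γ))
  refine le_of_le_of_eq key ?_
  have step1 : B φ f f = ∑ x : s, ∑ y : s, (starRingEnd ℂ) (f x) * f y * φ ((x : Γ)⁻¹ * y) := by
    unfold B
    rw [← Finset.sum_coe_sort s]
    exact Finset.sum_congr rfl fun x _ => (Finset.sum_coe_sort s _).symm
  have step2 : (∑ x : s, ∑ y : s, (starRingEnd ℂ) (f x) * f y * φ ((x : Γ)⁻¹ * y))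
      = ∑ i, ∑ j, (starRingEnd ℂ) (f ((e.symm i : s) : Γ)) * f ((e.symm j : s) : Γ)
          * φ (((e.symm i : s) : Γ)⁻¹ * ((e.symm j : s) : Γ)) := by
    refine Fintype.sum_equiv e _ _ fun x => ?_
    refine Fintype.sum_equiv e _ _ fun y => ?_
    rw [Equiv.symm_apply_apply, Equiv.symm_apply_apply]
  exact (step1.trans step2).symm


structure PDF (Γ : Type) [Group Γ] where
  φ : Γ → ℂ
  posdef : IsPositiveDefinite φ
  norm1 : φ 1 = 1

theorem PDF.herm (p : PDF Γ) (γ : Γ) : (starRingEnd ℂ) (p.φ γ) = p.φ γ⁻¹ := by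
  have h1 := p.posdef 2 ![1, γ] ![1, 1]
  have h2 := p.posdef 2 ![1, γ] ![1, Complex.I]
  simp only [Fin.sum_univ_two, Matrix.cons_val_zero, Matrix.cons_val_one, Matrix.head_cons,
    inv_one, one_mul, mul_one, inv_mul_cancel, p.norm1, map_one, Complex.conj_I] at h1 h2
  have h1' := (Complex.le_def.mp h1).2
  have h2' := (Complex.le_def.mp h2).2
  simp only [Complex.add_im, Complex.one_im, Complex.mul_im, Complex.I_re, Complex.I_im,
    Complex.one_re, Complex.neg_im, Complex.neg_re, Complex.mul_re, Complex.zero_im] at h1' h2'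
  apply Complex.ext <;>
    simp only [Complex.conj_re, Complex.conj_im] <;> linarith

def GNS (p : PDF Γ) : Type := Γ →₀ ℂ

namespace GNS

variable {p : PDF Γ}

noncomputable instance : AddCommGroup (GNS p) := inferInstanceAs (AddCommGroup (Γ →₀ ℂ))
noncomputable instance : Module ℂ (GNS p) := inferInstanceAs (Module ℂ (Γ →₀ ℂ))

noncomputable def core (p : PDF Γ) : PreInnerProductSpace.Core ℂ (GNS p) where
  inner f g := B p.φ f g
  conj_inner_symm f g := B_conj p.φ p.herm f g
  re_inner_nonneg f := by
    have h := (Complex.le_def.mp (B_self_nonneg p.φ p.posdef f)).1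
    simpa using h
  add_left f g h := by classical exact B_add_left p.φ f g h
  smul_left f g r := B_smul_left p.φ r f g

noncomputable instance : SeminormedAddCommGroup (GNS p) :=
  @InnerProductSpace.Core.toSeminormedAddCommGroup ℂ (GNS p) _ _ _ (core p)

noncomputable instance : InnerProductSpace ℂ (GNS p) :=
  letI c := core p
  { @InnerProductSpace.Core.toNormedSpace ℂ (GNS p) _ _ _ c with
    inner := fun f g => B p.φ f g
    norm_sq_eq_re_inner := fun x => by
      have h₂ : (0:ℝ) ≤ RCLike.re (B p.φ x x) := c.re_inner_nonneg x
      have h₁ : ‖x‖ = Real.sqrt (RCLike.re (B p.φ x x)) := rfl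
      rw [h₁, Real.sq_sqrt h₂]
    conj_inner_symm := c.conj_inner_symm
    add_left := c.add_left
    smul_left := c.smul_left }

theorem inner_def (f g : GNS p) : (inner ℂ f g : ℂ) = B p.φ f g := rfl

theorem norm_def (f : GNS p) : ‖f‖ = Real.sqrt (B p.φ f f).re := rfl

theorem norm_def' (f : GNS p) : ‖f‖ = Real.sqrt (RCLike.re (inner ℂ f f : ℂ)) := rfl

end GNS

noncomputable def transl (p : PDF Γ) (γ : Γ) : GNS p →ₗ[ℂ] GNS p :=
  Finsupp.lmapDomain ℂ ℂ (fun x => γ * x)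

variable {p : PDF Γ}

theorem transl_apply (γ : Γ) (f : GNS p) :
    transl p γ f = Finsupp.mapDomain (fun x => γ * x) f := rfl

theorem transl_inner (γ : Γ) (f g : GNS p) :
    (inner ℂ (transl p γ f) (transl p γ g) : ℂ) = inner ℂ f g := by
  classical
  have hinj : Function.Injective (fun x : Γ => γ * x) := fun a b h => by simpa using h
  rw [GNS.inner_def, GNS.inner_def, transl_apply, transl_apply]
  unfold B
  erw [Finsupp.mapDomain_support_of_injective hinj, Finsupp.mapDomain_support_of_injective hinj,
      Finset.sum_image (fun a _ b _ h => hinj h)]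
  refine Finset.sum_congr rfl fun x hx => ?_
  rw [Finset.sum_image (fun a _ b _ h => hinj h)]
  refine Finset.sum_congr rfl fun y hy => ?_
  erw [Finsupp.mapDomain_apply hinj, Finsupp.mapDomain_apply hinj]
  congr 2
  simp [mul_assoc]

theorem transl_norm (γ : Γ) (f : GNS p) : ‖transl p γ f‖ = ‖f‖ := by
  rw [GNS.norm_def', GNS.norm_def', transl_inner]

theorem transl_mul (γ γ' : Γ) (f : GNS p) : transl p γ (transl p γ' f) = transl p (γ * γ') f := by
  rw [transl_apply, transl_apply, transl_apply]
  have h : ((fun x : Γ => γ * x) ∘ fun x : Γ => γ' * x) = fun x : Γ => (γ * γ') * x := by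
    funext x; simp [mul_assoc]
  rw [← h]; exact Finsupp.mapDomain_comp.symm

theorem transl_one (f : GNS p) : transl p 1 f = f := by
  rw [transl_apply]
  have h : (fun x : Γ => (1:Γ) * x) = id := funext fun x => one_mul x
  rw [h]; exact Finsupp.mapDomain_id

noncomputable abbrev Qt (p : PDF Γ) := SeparationQuotient (GNS p)
noncomputable abbrev Hs (p : PDF Γ) := UniformSpace.Completion (Qt p)

theorem transl_compat (γ : Γ) : ∀ x y : GNS p, Inseparable x y →
    SeparationQuotient.mk (transl p γ x) = SeparationQuotient.mk (transl p γ y) := by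
  intro x y hxy
  rw [SeparationQuotient.mk_eq_mk, Metric.inseparable_iff, dist_eq_norm, ← map_sub,
    transl_norm, ← dist_eq_norm, ← Metric.inseparable_iff]
  exact hxy

noncomputable def translQ (p : PDF Γ) (γ : Γ) : Qt p →L[ℂ] Qt p :=
  LinearMap.mkContinuous
    { toFun := SeparationQuotient.lift (fun f => SeparationQuotient.mk (transl p γ f))
        (transl_compat γ)
      map_add' := fun a b => by
        obtain ⟨f, rfl⟩ := SeparationQuotient.surjective_mk a
        obtain ⟨g, rfl⟩ := SeparationQuotient.surjective_mk b
        show SeparationQuotient.lift _ (transl_compat γ) (SeparationQuotient.mk f + SeparationQuotient.mk g)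
          = SeparationQuotient.lift _ (transl_compat γ) (SeparationQuotient.mk f)
            + SeparationQuotient.lift _ (transl_compat γ) (SeparationQuotient.mk g)
        rw [← SeparationQuotient.mk_add, SeparationQuotient.lift_mk, SeparationQuotient.lift_mk,
          SeparationQuotient.lift_mk, map_add, SeparationQuotient.mk_add]
      map_smul' := fun c a => by
        obtain ⟨f, rfl⟩ := SeparationQuotient.surjective_mk a
        show SeparationQuotient.lift _ (transl_compat γ) (SeparationQuotient.mk (c • f))
          = c • SeparationQuotient.lift _ (transl_compat γ) (SeparationQuotient.mk f)
        rw [SeparationQuotient.lift_mk, SeparationQuotient.lift_mk, _root_.map_smul,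
          SeparationQuotient.mk_smul] }
    1
    (fun a => by
      obtain ⟨f, rfl⟩ := SeparationQuotient.surjective_mk a
      simp only [LinearMap.coe_mk, AddHom.coe_mk, SeparationQuotient.lift_mk, one_mul]
      rw [SeparationQuotient.norm_mk, SeparationQuotient.norm_mk, transl_norm])

theorem translQ_mk (γ : Γ) (f : GNS p) :
    translQ p γ (SeparationQuotient.mk f) = SeparationQuotient.mk (transl p γ f) := by
  simp only [translQ, LinearMap.mkContinuous_apply, LinearMap.coe_mk, AddHom.coe_mk,
    SeparationQuotient.lift_mk]

theorem translQ_inner (γ : Γ) (a b : Qt p) :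
    (inner ℂ (translQ p γ a) (translQ p γ b) : ℂ) = inner ℂ a b := by
  obtain ⟨f, rfl⟩ := SeparationQuotient.surjective_mk a
  obtain ⟨g, rfl⟩ := SeparationQuotient.surjective_mk b
  rw [translQ_mk, translQ_mk, SeparationQuotient.inner_mk_mk, SeparationQuotient.inner_mk_mk,
    transl_inner]

theorem translQ_norm (γ : Γ) (a : Qt p) : ‖translQ p γ a‖ = ‖a‖ := by
  obtain ⟨f, rfl⟩ := SeparationQuotient.surjective_mk a
  rw [translQ_mk, SeparationQuotient.norm_mk, SeparationQuotient.norm_mk, transl_norm]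

theorem translQ_mul (γ γ' : Γ) (a : Qt p) :
    translQ p γ (translQ p γ' a) = translQ p (γ * γ') a := by
  obtain ⟨f, rfl⟩ := SeparationQuotient.surjective_mk a
  rw [translQ_mk, translQ_mk, translQ_mk, transl_mul]

theorem translQ_one (a : Qt p) : translQ p 1 a = a := by
  obtain ⟨f, rfl⟩ := SeparationQuotient.surjective_mk a
  rw [translQ_mk, transl_one]

open UniformSpace in
noncomputable def translH (p : PDF Γ) (γ : Γ) : Hs p →L[ℂ] Hs p :=
  ((Completion.toComplL : Qt p →L[ℂ] Hs p).comp (translQ p γ)).extend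
    (Completion.toComplL : Qt p →L[ℂ] Hs p)

theorem translH_coe (γ : Γ) (a : Qt p) :
    translH p γ (a : Hs p) = ((translQ p γ a : Qt p) : Hs p) := by
  have h := ContinuousLinearMap.extend_eq
    (f := (UniformSpace.Completion.toComplL : Qt p →L[ℂ] Hs p).comp (translQ p γ))
    (e := (UniformSpace.Completion.toComplL : Qt p →L[ℂ] Hs p))
    (by rw [UniformSpace.Completion.coe_toComplL]; exact UniformSpace.Completion.denseRange_coe)
    (by rw [UniformSpace.Completion.coe_toComplL]
        exact UniformSpace.Completion.isUniformInducing_coe _) a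
  simpa [translH, UniformSpace.Completion.coe_toComplL] using h

theorem translH_norm (γ : Γ) (x : Hs p) : ‖translH p γ x‖ = ‖x‖ := by
  refine UniformSpace.Completion.induction_on x ?_ ?_
  · exact isClosed_eq ((translH p γ).continuous.norm) continuous_norm
  · intro a
    rw [translH_coe, UniformSpace.Completion.norm_coe, UniformSpace.Completion.norm_coe,
      translQ_norm]

theorem translH_inner (γ : Γ) (x y : Hs p) :
    (inner ℂ (translH p γ x) (translH p γ y) : ℂ) = inner ℂ x y := by
  refine UniformSpace.Completion.induction_on₂ x y ?_ ?_
  · apply isClosed_eq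
    · exact UniformSpace.Completion.Continuous.inner
        ((translH p γ).continuous.comp continuous_fst)
        ((translH p γ).continuous.comp continuous_snd)
    · exact UniformSpace.Completion.Continuous.inner continuous_fst continuous_snd
  · intro a b
    rw [translH_coe, translH_coe, UniformSpace.Completion.inner_coe,
      UniformSpace.Completion.inner_coe, translQ_inner]

theorem translH_mul (γ γ' : Γ) (x : Hs p) :
    translH p γ (translH p γ' x) = translH p (γ * γ') x := by
  refine UniformSpace.Completion.induction_on x ?_ ?_
  · exact isClosed_eq ((translH p γ).continuous.comp (translH p γ').continuous)
      (translH p (γ * γ')).continuous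
  · intro a
    rw [translH_coe, translH_coe, translH_coe, translQ_mul]

theorem translH_one (x : Hs p) : translH p 1 x = x := by
  refine UniformSpace.Completion.induction_on x ?_ ?_
  · exact isClosed_eq (translH p 1).continuous continuous_id
  · intro a
    rw [translH_coe, translQ_one]

noncomputable def rep (p : PDF Γ) : Γ →* (Hs p →L[ℂ] Hs p) where
  toFun := translH p
  map_one' := by ext x; exact translH_one x
  map_mul' := fun γ γ' => by
    ext x
    exact (translH_mul γ γ' x).symm

noncomputable def vecG (p : PDF Γ) : GNS p := Finsupp.single 1 1

noncomputable def vec (p : PDF Γ) : Hs p :=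
  ((SeparationQuotient.mk (vecG p) : Qt p) : Hs p)

theorem transl_vecG (γ : Γ) : transl p γ (vecG p) = (Finsupp.single γ 1 : Γ →₀ ℂ) := by
  rw [transl_apply]
  show Finsupp.mapDomain (fun x => γ * x) (Finsupp.single 1 1) = _
  rw [Finsupp.mapDomain_single, mul_one]

theorem B_single (x y : Γ) :
    B p.φ (Finsupp.single x 1) (Finsupp.single y 1) = p.φ (x⁻¹ * y) := by
  classical
  unfold B
  rw [Finsupp.support_single_ne_zero x one_ne_zero, Finsupp.support_single_ne_zero y one_ne_zero,
    Finset.sum_singleton, Finset.sum_singleton, Finsupp.single_eq_same, Finsupp.single_eq_same,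
    map_one, one_mul, one_mul]

theorem inner_vec (γ : Γ) : (inner ℂ (vec p) (translH p γ (vec p)) : ℂ) = p.φ γ := by
  rw [vec, translH_coe, translQ_mk, UniformSpace.Completion.inner_coe,
    SeparationQuotient.inner_mk_mk, GNS.inner_def, transl_vecG]
  show B p.φ (Finsupp.single 1 1) (Finsupp.single γ 1) = p.φ γ
  rw [B_single, inv_one, one_mul]

theorem norm_vec : ‖vec p‖ = 1 := by
  rw [vec, UniformSpace.Completion.norm_coe, SeparationQuotient.norm_mk, GNS.norm_def]
  show Real.sqrt (B p.φ (Finsupp.single 1 1) (Finsupp.single 1 1)).re = 1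
  rw [B_single, inv_one, one_mul, p.norm1]
  simp

theorem norm_translH_vec (γ : Γ) : ‖translH p γ (vec p)‖ = 1 := by
  rw [translH_norm, norm_vec]

theorem dist_sq (γ : Γ) :
    ‖translH p γ (vec p) - vec p‖ ^ 2 = 2 - 2 * (p.φ γ).re := by
  rw [@norm_sub_sq ℂ]
  rw [norm_translH_vec, norm_vec, inner_re_symm, inner_vec]
  norm_num
  ring

end KazhdanGNS

open KazhdanGNS in
/-- Proposition 5.3: if `(Q, ε)` is a Kazhdan pair, `δ > 0`, and `φ` is
positive-definite with `φ(1) = 1` and `Re φ(γ) ≥ 1 - δ²ε²/2` on `Q`, then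
`Re φ(γ) ≥ 1 - 2δ²` on all of `Γ`. -/
theorem posdef_almost_invariant_everywhere
    (Γ : Type) [Group Γ] [Countable Γ]
    (Q : Set Γ) (ε : ℝ) (hQε : IsKazhdanPair Γ Q ε)
    (δ : ℝ) (hδ : 0 < δ)
    (φ : Γ → ℂ) (hφ : IsPositiveDefinite φ) (hφ1 : φ 1 = 1)
    (hQ : ∀ γ ∈ Q, 1 - δ ^ 2 * ε ^ 2 / 2 ≤ (φ γ).re) :
    ∀ γ : Γ, 1 - 2 * δ ^ 2 ≤ (φ γ).re := by
  obtain ⟨hQfin, hQgen, hε, hKaz⟩ := hQε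
  set p : PDF Γ := ⟨φ, hφ, hφ1⟩ with hp
  set ξ : Hs p := vec p with hξ
  -- the invariant subspace
  let N : Submodule ℂ (Hs p) :=
    { carrier := {v | ∀ γ : Γ, translH p γ v = v}
      add_mem' := fun {a b} ha hb γ => by rw [map_add, ha γ, hb γ]
      zero_mem' := fun γ => by rw [map_zero]
      smul_mem' := fun c a ha γ => by rw [_root_.map_smul, ha γ] }
  have hNmem : ∀ v : Hs p, v ∈ N ↔ ∀ γ : Γ, translH p γ v = v := fun v => Iff.rfl
  have hNclosed : IsClosed (N : Set (Hs p)) := by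
    have h : (N : Set (Hs p)) = ⋂ γ : Γ, {v | translH p γ v = v} := by
      ext v
      simp only [Set.mem_iInter, SetLike.mem_coe, hNmem, Set.mem_setOf_eq]
    rw [h]
    exact isClosed_iInter fun γ => isClosed_eq (translH p γ).continuous continuous_id
  haveI : CompleteSpace N := hNclosed.completeSpace_coe
  haveI : CompleteSpace (Nᗮ : Submodule ℂ (Hs p)) :=
    (Submodule.isClosed_orthogonal N).completeSpace_coe
  set v : Hs p := (N.orthogonalProjectionOnto ξ : Hs p) with hv
  have hvN : v ∈ N := SetLike.coe_mem _
  set w : Hs p := ξ - v with hwdef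
  have hwperp : w ∈ Nᗮ := Submodule.sub_starProjection_mem_orthogonal (K := N) ξ
  -- Nᗮ is invariant
  have hperp_inv : ∀ (γ : Γ) (u : Hs p), u ∈ Nᗮ → translH p γ u ∈ Nᗮ := by
    intro γ u hu
    rw [Submodule.mem_orthogonal] at hu ⊢
    intro n hn
    have hn' : translH p γ⁻¹ n = n := hn γ⁻¹
    calc (inner ℂ n (translH p γ u) : ℂ)
        = inner ℂ (translH p γ (translH p γ⁻¹ n)) (translH p γ u) := by
          rw [translH_mul, mul_inv_cancel, translH_one]
      _ = inner ℂ (translH p γ⁻¹ n) u := translH_inner γ _ _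
      _ = 0 := by rw [hn']; exact hu n hn
  -- key identity
  have hkey : ∀ γ : Γ, translH p γ w - w = translH p γ ξ - ξ := by
    intro γ
    rw [hwdef, map_sub, hvN γ]
    abel
  -- the restricted representation on Nᗮ
  let π' : Γ →* ((Nᗮ : Submodule ℂ (Hs p)) →L[ℂ] (Nᗮ : Submodule ℂ (Hs p))) :=
    { toFun := fun γ =>
        { toLinearMap :=
            { toFun := fun u => ⟨translH p γ u, hperp_inv γ u u.2⟩
              map_add' := fun a b => Subtype.ext (by
                simp only [Submodule.coe_add, map_add])
              map_smul' := fun c a => Subtype.ext (by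
                simp only [Submodule.coe_smul, _root_.map_smul, RingHom.id_apply]) }
          cont := ((translH p γ).continuous.comp continuous_subtype_val).subtype_mk _ }
      map_one' := by
        ext u
        exact translH_one (u : Hs p)
      map_mul' := fun γ γ' => by
        ext u
        exact (translH_mul γ γ' (u : Hs p)).symm }
  have hπ'norm : ∀ (γ : Γ) (u : (Nᗮ : Submodule ℂ (Hs p))), ‖π' γ u‖ = ‖u‖ := by
    intro γ u
    show ‖translH p γ (u : Hs p)‖ = ‖(u : Hs p)‖
    exact translH_norm γ _
  -- small distance on Q
  have hQdist : ∀ γ ∈ Q, ‖translH p γ ξ - ξ‖ ≤ δ * ε := by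
    intro γ hγ
    have h1 : ‖translH p γ ξ - ξ‖ ^ 2 = 2 - 2 * (φ γ).re := dist_sq γ
    have h2 := hQ γ hγ
    have h3 : ‖translH p γ ξ - ξ‖ ^ 2 ≤ (δ * ε) ^ 2 := by
      rw [h1]; nlinarith
    nlinarith [norm_nonneg (translH p γ ξ - ξ), mul_nonneg hδ.le hε.le]
  -- ‖w‖ ≤ δ
  have hwle : ‖w‖ ≤ δ := by
    by_contra hcon
    push_neg at hcon
    have hKazh := hKaz (Nᗮ : Submodule ℂ (Hs p)) π' hπ'norm
      ⟨⟨w, hwperp⟩, by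
        intro γ hγ
        have hnorm1 : ‖π' γ ⟨w, hwperp⟩ - ⟨w, hwperp⟩‖ = ‖translH p γ w - w‖ := rfl
        rw [hnorm1, hkey γ]
        have : ‖(⟨w, hwperp⟩ : (Nᗮ : Submodule ℂ (Hs p)))‖ = ‖w‖ := rfl
        rw [this]
        calc ‖translH p γ ξ - ξ‖ ≤ δ * ε := hQdist γ hγ
          _ < ε * ‖w‖ := by rw [mul_comm]; exact mul_lt_mul_of_pos_left hcon hε⟩
    obtain ⟨η, hη0, hηinv⟩ := hKazh
    have hηN : (η : Hs p) ∈ N := by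
      intro γ
      exact congrArg Subtype.val (hηinv γ)
    have hη2 := η.2
    rw [Submodule.mem_orthogonal] at hη2
    have hzero : (η : Hs p) = 0 := inner_self_eq_zero.mp (hη2 (η : Hs p) hηN)
    exact hη0 (Subtype.ext hzero)
  -- conclusion
  intro γ
  have h1 : ‖translH p γ ξ - ξ‖ ≤ 2 * δ := by
    rw [← hkey γ]
    calc ‖translH p γ w - w‖ ≤ ‖translH p γ w‖ + ‖w‖ := norm_sub_le _ _
      _ = ‖w‖ + ‖w‖ := by rw [translH_norm]
      _ ≤ 2 * δ := by linarith
  have h2 : ‖translH p γ ξ - ξ‖ ^ 2 = 2 - 2 * (φ γ).re := dist_sq γ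
  nlinarith [norm_nonneg (translH p γ ξ - ξ)]
end
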